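/- arXiv:1311.0531 — 2 statements merged into one kernel-verified Lean document; each statement's English description precedes it below -/
import Mathlib

section
/- Let A and B be finite non-collinear subsets of ℝ², and let v be a unit vector that is not parallel to any side of [A] or of [B]. Suppose A_{v,low} = ∅. Then i_{A+B} ≥ |B_{v,upp}| − 2; moreover, if i_{A+B} = |B_{v,upp}| − 2, then B_{v,low} is contained in the closed segment [l_{v,B}, r_{v,B}], and the vector r_{v,A} − l_{v,A} is parallel to the vector r_{v,B} − l_{v,B}. -/
open scoped Pointwise Classical RealInnerProductSpace

noncomputable section

/-- The plane `ℝ²`. -/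
abbrev Pt : Type := EuclideanSpace ℝ (Fin 2)

/-- `b_A`: the number of points of `A` on the frontier of the convex hull of `A`. -/
def bdryCard (A : Finset Pt) : ℕ :=
  (A.filter fun x => x ∈ frontier (convexHull ℝ (A : Set Pt))).card

/-- `i_A`: the number of points of `A` in the interior of the convex hull of `A`. -/
def intCard (A : Finset Pt) : ℕ :=
  (A.filter fun x => x ∈ interior (convexHull ℝ (A : Set Pt))).card

/-- `u` is an exterior normal to the convex hull of `A` at `x`,
i.e. `u·x = max {u·y : y ∈ A}` (for `x ∈ A`). -/
def IsExtNormal (A : Finset Pt) (u x : Pt) : Prop :=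
  ∀ y ∈ A, ⟪u, y⟫ ≤ ⟪u, x⟫

/-- `A_u`: the set of points of `A` where `u·x` is maximal. -/
def maxSet (A : Finset Pt) (u : Pt) : Finset Pt :=
  A.filter fun x => ∀ y ∈ A, ⟪u, y⟫ ≤ ⟪u, x⟫

/-- `C` is an arithmetic progression with difference `d`. -/
def IsAP (C : Finset Pt) (d : Pt) : Prop :=
  ∃ c : Pt, C = (Finset.range C.card).image fun k => c + (k : ℝ) • d

/-- `A_{v,upp}`: points of `A` having a nonzero exterior normal, all of whose
unit exterior normals `u` satisfy `u·v > 0`. -/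
def upperSet (A : Finset Pt) (v : Pt) : Finset Pt :=
  A.filter fun a => (∃ u : Pt, u ≠ 0 ∧ IsExtNormal A u a) ∧
    ∀ u : Pt, ‖u‖ = 1 → IsExtNormal A u a → 0 < ⟪u, v⟫

/-- `A_{v,low}`: points of `A` having a nonzero exterior normal, all of whose
unit exterior normals `u` satisfy `u·v < 0`. -/
def lowerSet (A : Finset Pt) (v : Pt) : Finset Pt :=
  A.filter fun a => (∃ u : Pt, u ≠ 0 ∧ IsExtNormal A u a) ∧
    ∀ u : Pt, ‖u‖ = 1 → IsExtNormal A u a → ⟪u, v⟫ < 0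

/-- The unit vector `v` is not parallel to any side of the convex hull of `A`. -/
def NotParallelToSide (v : Pt) (A : Finset Pt) : Prop :=
  ∀ u : Pt, ‖u‖ = 1 → ⟪u, v⟫ = 0 → (maxSet A u).card ≤ 1

/-- For `v = (v₁, v₂)`, the rotated vector `w = (v₂, -v₁)`. -/
def perp (v : Pt) : Pt := (EuclideanSpace.equiv (Fin 2) ℝ).symm ![v 1, -(v 0)]

/-- `r_{v,A}`: a point of `A` where `(perp v)·x` is maximal (the rightmost point of `A`);
it is unique when `v` is not parallel to any side of the convex hull of `A`. -/
def rPt (v : Pt) (A : Finset Pt) : Pt :=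
  if h : ∃ x ∈ A, ∀ y ∈ A, ⟪perp v, y⟫ ≤ ⟪perp v, x⟫ then h.choose else 0

/-- `l_{v,A}`: a point of `A` where `(perp v)·x` is minimal (the leftmost point of `A`);
it is unique when `v` is not parallel to any side of the convex hull of `A`. -/
def lPt (v : Pt) (A : Finset Pt) : Pt :=
  if h : ∃ x ∈ A, ∀ y ∈ A, ⟪perp v, x⟫ ≤ ⟪perp v, y⟫ then h.choose else 0
namespace ULAux

lemma inner_coords (x y : Pt) : ⟪x, y⟫ = x 0 * y 0 + x 1 * y 1 := by
  simp [PiLp.inner_apply, Fin.sum_univ_two, RCLike.inner_apply, conj_trivial, mul_comm]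

@[simp] lemma perp_apply_zero (v : Pt) : (perp v) 0 = v 1 := rfl
@[simp] lemma perp_apply_one (v : Pt) : (perp v) 1 = -(v 0) := rfl

lemma inner_perp_self (v : Pt) : ⟪perp v, v⟫ = 0 := by
  simp [inner_coords]; ring

lemma norm_sq_coords (x : Pt) (h : ‖x‖ = 1) : x 0 ^ 2 + x 1 ^ 2 = 1 := by
  have h2 : ⟪x, x⟫ = (1 : ℝ) := by
    rw [real_inner_self_eq_norm_mul_norm, h]; norm_num
  rw [inner_coords] at h2; nlinarith [h2]

lemma norm_perp (v : Pt) (hv : ‖v‖ = 1) : ‖perp v‖ = 1 := by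
  have h2 : v 0 ^ 2 + v 1 ^ 2 = 1 := norm_sq_coords v hv
  have : ‖perp v‖ ^ 2 = 1 := by
    rw [← real_inner_self_eq_norm_sq, inner_coords]
    simp; nlinarith
  nlinarith [norm_nonneg (perp v)]

lemma inner_perp_perp (v : Pt) (hv : ‖v‖ = 1) (x y : Pt) :
    ⟪perp v, x⟫ = ⟪perp v, y⟫ → ⟪v, x⟫ = ⟪v, y⟫ → x = y := by
  have h2 : v 0 ^ 2 + v 1 ^ 2 = 1 := norm_sq_coords v hv
  intro hw hvx
  simp only [inner_coords, perp_apply_zero, perp_apply_one] at hw hvx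
  ext i
  fin_cases i
  · show x 0 = y 0
    linear_combination v 0 * hvx + v 1 * hw + (y 0 - x 0) * h2
  · show x 1 = y 1
    linear_combination v 1 * hvx - v 0 * hw + (y 1 - x 1) * h2

/-- decomposition of an inner product along the orthonormal basis `v, perp v`. -/
lemma inner_decomp (v : Pt) (hv : ‖v‖ = 1) (u x : Pt) :
    ⟪u, x⟫ = ⟪u, v⟫ * ⟪v, x⟫ + ⟪u, perp v⟫ * ⟪perp v, x⟫ := by
  have h2 : v 0 ^ 2 + v 1 ^ 2 = 1 := norm_sq_coords v hv
  simp only [inner_coords, perp_apply_zero, perp_apply_one]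
  linear_combination (-(u 0 * x 0) - u 1 * x 1) * h2

end ULAux
namespace ULAux

lemma extNormal_smul {A : Finset Pt} {u x : Pt} {c : ℝ} (hc : 0 ≤ c)
    (h : IsExtNormal A u x) : IsExtNormal A (c • u) x := fun y hy => by
  rw [real_inner_smul_left, real_inner_smul_left]
  exact mul_le_mul_of_nonneg_left (h y hy) hc

lemma extNormal_add {A : Finset Pt} {u u' x : Pt}
    (h : IsExtNormal A u x) (h' : IsExtNormal A u' x) : IsExtNormal A (u + u') x := fun y hy => by
  rw [inner_add_left, inner_add_left]
  exact add_le_add (h y hy) (h' y hy)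

lemma exists_unit_normal {A : Finset Pt} {u x : Pt} (hu : u ≠ 0)
    (h : IsExtNormal A u x) : ∃ n : Pt, ‖n‖ = 1 ∧ IsExtNormal A n x := by
  refine ⟨‖u‖⁻¹ • u, norm_smul_inv_norm hu, extNormal_smul (by positivity) h⟩

lemma unit_eq_of_cross (v : Pt) (hv : ‖v‖ = 1) {u u' : Pt} (hu : ‖u‖ = 1) (hu' : ‖u'‖ = 1)
    (h1 : 0 < ⟪u, v⟫) (h2 : 0 < ⟪u', v⟫)
    (hc : ⟪u, v⟫ * ⟪u', perp v⟫ = ⟪u', v⟫ * ⟪u, perp v⟫) : u = u' := by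
  set a := ⟪u, v⟫ with ha
  set b := ⟪u, perp v⟫ with hb
  set a' := ⟪u', v⟫ with ha'
  set b' := ⟪u', perp v⟫ with hb'
  have hn : a ^ 2 + b ^ 2 = 1 := by
    have e := inner_decomp v hv u u
    rw [real_inner_self_eq_norm_mul_norm, hu] at e
    have c1 : ⟪v, u⟫ = a := real_inner_comm u v
    have c2 : ⟪perp v, u⟫ = b := real_inner_comm u (perp v)
    rw [c1, c2] at e; nlinarith [e]
  have hn' : a' ^ 2 + b' ^ 2 = 1 := by
    have e := inner_decomp v hv u' u'
    rw [real_inner_self_eq_norm_mul_norm, hu'] at e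
    have c1 : ⟪v, u'⟫ = a' := real_inner_comm u' v
    have c2 : ⟪perp v, u'⟫ = b' := real_inner_comm u' (perp v)
    rw [c1, c2] at e; nlinarith [e]
  have hsq : a ^ 2 = a' ^ 2 := by
    linear_combination (-(a ^ 2)) * hn' + a' ^ 2 * hn + (a * b' + a' * b) * hc
  have haa : a = a' := by
    have hz : (a - a') * (a + a') = 0 := by linear_combination hsq
    rcases mul_eq_zero.1 hz with h | h
    · linarith
    · linarith
  have hbb : b = b' := by
    have : a * b' = a * b := by rw [haa] at hc ⊢; linarith [hc]
    have := mul_left_cancel₀ (ne_of_gt h1) this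
    linarith
  have e1 : ⟪v, u⟫ = ⟪v, u'⟫ := by
    rw [real_inner_comm u v, real_inner_comm u' v]
    rw [ha, ha'] at haa; exact haa
  have e2 : ⟪perp v, u⟫ = ⟪perp v, u'⟫ := by
    rw [real_inner_comm u (perp v), real_inner_comm u' (perp v)]
    rw [hb, hb'] at hbb; exact hbb
  exact inner_perp_perp v hv u u' e2 e1

lemma perp_span {u z : Pt} (hu : ‖u‖ = 1) (h : ⟪u, z⟫ = 0) :
    z = ⟪perp u, z⟫ • perp u := by
  have hn : u 0 ^ 2 + u 1 ^ 2 = 1 := norm_sq_coords u hu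
  rw [inner_coords] at h
  ext i
  have hc : ⟪perp u, z⟫ = u 1 * z 0 - u 0 * z 1 := by
    rw [inner_coords]; simp only [perp_apply_zero, perp_apply_one]; ring
  fin_cases i
  · show z 0 = ⟪perp u, z⟫ * (perp u) 0
    rw [hc]; simp only [perp_apply_zero]
    linear_combination u 0 * h + (-(z 0)) * hn
  · show z 1 = ⟪perp u, z⟫ * (perp u) 1
    rw [hc]; simp only [perp_apply_one]
    linear_combination u 1 * h + (-(z 1)) * hn

lemma collinear_of_inner_const {s : Set Pt} {u : Pt} (hu : ‖u‖ = 1) {c : ℝ}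
    (h : ∀ y ∈ s, ⟪u, y⟫ = c) : Collinear ℝ s := by
  rcases s.eq_empty_or_nonempty with rfl | ⟨p, hp⟩
  · exact collinear_empty ℝ Pt
  · rw [collinear_iff_of_mem hp]
    refine ⟨perp u, fun p' hp' => ⟨⟪perp u, p' - p⟫, ?_⟩⟩
    have h0 : ⟪u, p' - p⟫ = 0 := by rw [inner_sub_right, h p' hp', h p hp]; ring
    have := perp_span hu h0
    rw [vadd_eq_add, ← this]
    abel

lemma rPt_spec (v : Pt) (B : Finset Pt) (hB : B.Nonempty) :
    rPt v B ∈ B ∧ ∀ y ∈ B, ⟪perp v, y⟫ ≤ ⟪perp v, rPt v B⟫ := by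
  have h : ∃ x ∈ B, ∀ y ∈ B, ⟪perp v, y⟫ ≤ ⟪perp v, x⟫ :=
    B.exists_max_image (fun x => ⟪perp v, x⟫) hB
  rw [rPt, dif_pos h]
  exact h.choose_spec

lemma lPt_spec (v : Pt) (B : Finset Pt) (hB : B.Nonempty) :
    lPt v B ∈ B ∧ ∀ y ∈ B, ⟪perp v, lPt v B⟫ ≤ ⟪perp v, y⟫ := by
  have h : ∃ x ∈ B, ∀ y ∈ B, ⟪perp v, x⟫ ≤ ⟪perp v, y⟫ :=
    B.exists_min_image (fun x => ⟪perp v, x⟫) hB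
  rw [lPt, dif_pos h]
  exact h.choose_spec

lemma max_unique {B : Finset Pt} {u : Pt} (hcard : (maxSet B u).card ≤ 1) {x y : Pt}
    (hx : x ∈ B) (hy : y ∈ B) (hxm : ∀ z ∈ B, ⟪u, z⟫ ≤ ⟪u, x⟫)
    (hym : ∀ z ∈ B, ⟪u, z⟫ ≤ ⟪u, y⟫) : x = y :=
  Finset.card_le_one.1 hcard x (Finset.mem_filter.2 ⟨hx, hxm⟩) y (Finset.mem_filter.2 ⟨hy, hym⟩)

lemma nonempty_of_noncol {A : Finset Pt} (hA : ¬ Collinear ℝ (A : Set Pt)) : A.Nonempty := by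
  rcases A.eq_empty_or_nonempty with rfl | h
  · simp only [Finset.coe_empty] at hA
    exact absurd (collinear_empty ℝ Pt) hA
  · exact h

end ULAux
namespace ULAux

lemma interior_hull_nonempty {A : Finset Pt} (hA : ¬ Collinear ℝ (A : Set Pt)) :
    (interior (convexHull ℝ (A : Set Pt))).Nonempty := by
  rw [interior_convexHull_nonempty_iff_affineSpan_eq_top]
  have hne : (A : Set Pt).Nonempty := by
    obtain ⟨a, ha⟩ := nonempty_of_noncol hA
    exact ⟨a, ha⟩
  rw [AffineSubspace.affineSpan_eq_top_iff_vectorSpan_eq_top_of_nonempty ℝ Pt Pt hne]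
  have h1 : ¬ (Module.finrank ℝ (vectorSpan ℝ (A : Set Pt)) ≤ 1) := fun h =>
    hA (collinear_iff_finrank_le_one.2 h)
  have h2 : Module.finrank ℝ (vectorSpan ℝ (A : Set Pt)) ≤ 2 := by
    have := Submodule.finrank_le (vectorSpan ℝ (A : Set Pt))
    simpa using this
  apply Submodule.eq_top_of_finrank_eq
  have : Module.finrank ℝ Pt = 2 := by simp
  omega

lemma exists_unit_support {C : Finset Pt}
    (hint : (interior (convexHull ℝ (C : Set Pt))).Nonempty)
    {z : Pt} (hz : z ∉ interior (convexHull ℝ (C : Set Pt))) :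
    ∃ u : Pt, ‖u‖ = 1 ∧ ∀ y ∈ C, ⟪u, y⟫ ≤ ⟪u, z⟫ := by
  set K := convexHull ℝ (C : Set Pt) with hK
  have hconv : Convex ℝ K := convex_convexHull ℝ _
  obtain ⟨f, hf⟩ := geometric_hahn_banach_open_point hconv.interior isOpen_interior hz
  obtain ⟨x0, hx0⟩ := hint
  have hfy : ∀ y ∈ K, f y ≤ f z := by
    intro y hy
    by_contra hgt
    push_neg at hgt
    have hx0z : f x0 < f z := hf x0 hx0
    have hd : 0 < f y - f x0 := by linarith
    set t : ℝ := (f y - f z) / (2 * (f y - f x0)) with ht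
    have ht0 : 0 < t := by
      apply div_pos (by linarith) (by linarith)
    have ht1 : t ≤ 1/2 := by
      rw [ht, div_le_iff₀ (by linarith)]
      nlinarith
    have hmem : t • x0 + (1 - t) • y ∈ interior K :=
      hconv.combo_interior_closure_mem_interior hx0 (subset_closure hy) ht0 (by linarith)
        (by ring)
    have hlt := hf _ hmem
    rw [map_add, map_smul, map_smul] at hlt
    simp only [smul_eq_mul] at hlt
    rw [ht] at hlt
    have h2 : (f y - f z) / (2 * (f y - f x0)) * (f y - f x0) = (f y - f z)/2 := by
      field_simp
    nlinarith [hlt]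
  set u0 := (InnerProductSpace.toDual ℝ Pt).symm f with hu0
  have hrep : ∀ y : Pt, ⟪u0, y⟫ = f y := fun y => InnerProductSpace.toDual_symm_apply
  have hu0ne : u0 ≠ 0 := by
    intro h0
    have h1 := hf x0 hx0
    have e1 : f x0 = 0 := by rw [← hrep x0, h0]; simp
    have e2 : f z = 0 := by rw [← hrep z, h0]; simp
    rw [e1, e2] at h1; exact lt_irrefl _ h1
  refine ⟨‖u0‖⁻¹ • u0, norm_smul_inv_norm hu0ne, fun y hy => ?_⟩
  rw [real_inner_smul_left, real_inner_smul_left, hrep, hrep]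
  have hle : f y ≤ f z := hfy y (subset_convexHull ℝ _ hy)
  have hpos : (0:ℝ) ≤ ‖u0‖⁻¹ := by positivity
  exact mul_le_mul_of_nonneg_left hle hpos

lemma interior_sum_nonempty {A B : Finset Pt} (hA : ¬ Collinear ℝ (A : Set Pt))
    (hBne : B.Nonempty) :
    (interior (convexHull ℝ ((A + B : Finset Pt) : Set Pt))).Nonempty := by
  obtain ⟨x0, hx0⟩ := interior_hull_nonempty hA
  obtain ⟨b0, hb0⟩ := hBne
  have hsub : (fun y => y + b0) '' (interior (convexHull ℝ (A : Set Pt))) ⊆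
      convexHull ℝ ((A + B : Finset Pt) : Set Pt) := by
    rintro _ ⟨y, hy, rfl⟩
    have hy' : y ∈ convexHull ℝ (A : Set Pt) := interior_subset hy
    rw [Finset.coe_add, convexHull_add]
    exact Set.add_mem_add hy' (subset_convexHull ℝ _ hb0)
  have hopen : IsOpen ((fun y => y + b0) '' interior (convexHull ℝ (A : Set Pt))) :=
    (Homeomorph.addRight b0).isOpenMap _ isOpen_interior
  exact ⟨x0 + b0, interior_maximal hsub hopen ⟨x0, hx0, rfl⟩⟩

lemma sum_mem_interior {A B : Finset Pt}
    (hint : (interior (convexHull ℝ ((A + B : Finset Pt) : Set Pt))).Nonempty)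
    {a b : Pt} (ha : a ∈ A) (hb : b ∈ B)
    (h : ∀ u : Pt, ‖u‖ = 1 → IsExtNormal A u a → IsExtNormal B u b → False) :
    a + b ∈ interior (convexHull ℝ ((A + B : Finset Pt) : Set Pt)) := by
  by_contra hni
  obtain ⟨u, hu1, hu⟩ := exists_unit_support hint hni
  refine h u hu1 (fun y hy => ?_) (fun y hy => ?_)
  · have := hu (y + b) (Finset.add_mem_add hy hb)
    rw [inner_add_right, inner_add_right] at this; linarith
  · have := hu (a + y) (Finset.add_mem_add ha hy)
    rw [inner_add_right, inner_add_right] at this; linarith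

end ULAux
namespace ULAux

section ASide

variable {A : Finset Pt} {v : Pt}

lemma collinear_contra (hA : ¬ Collinear ℝ (A : Set Pt)) {u : Pt} {c : ℝ} (hu : ‖u‖ = 1)
    (h : ∀ y ∈ A, ⟪u, y⟫ = c) : False :=
  hA (collinear_of_inner_const hu (fun y hy => by
    rcases Finset.mem_coe.1 hy with hy'
    exact h y hy'))

lemma wlr (hv : ‖v‖ = 1) (hA : ¬ Collinear ℝ (A : Set Pt)) :
    ⟪perp v, lPt v A⟫ < ⟪perp v, rPt v A⟫ := by
  obtain ⟨hlm, hlmin⟩ := lPt_spec v A (nonempty_of_noncol hA)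
  obtain ⟨hrm, hrmax⟩ := rPt_spec v A (nonempty_of_noncol hA)
  rcases lt_or_eq_of_le (hlmin _ hrm) with h | h
  · exact h
  · exfalso
    apply collinear_contra hA (norm_perp v hv) (c := ⟪perp v, lPt v A⟫)
    intro y hy
    have h1 := hlmin y hy
    have h2 := hrmax y hy
    rw [← h] at h2
    linarith

lemma dw_pos (hv : ‖v‖ = 1) (hA : ¬ Collinear ℝ (A : Set Pt)) :
    0 < ⟪perp v, rPt v A - lPt v A⟫ := by
  rw [inner_sub_right]
  linarith [wlr hv hA]

/-- Fact F2: a maximizer in a strictly "lower" direction is `lPt` or `rPt`. -/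
lemma lower_max_mem (hv : ‖v‖ = 1) (hA : ¬ Collinear ℝ (A : Set Pt))
    (hvA : NotParallelToSide v A) (hlow : lowerSet A v = ∅)
    {u x : Pt} (hu : ‖u‖ = 1) (huv : ⟪u, v⟫ < 0) (hx : x ∈ A) (hxn : IsExtNormal A u x) :
    x = lPt v A ∨ x = rPt v A := by
  have hlow' := hlow
  rw [lowerSet, Finset.filter_eq_empty_iff] at hlow'
  have hnot := hlow' hx
  push_neg at hnot
  obtain ⟨u', hu'1, hu'n, hu'v⟩ := hnot ⟨u, by
    intro h0; rw [h0] at hu; simp at hu, hxn⟩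
  set α : ℝ := ⟪u', v⟫ with hα
  set β : ℝ := ⟪u, v⟫ with hβ
  set n : Pt := α • u + (-β) • u' with hn
  by_cases hn0 : n = 0
  · -- then u = -u', A is on a line
    have hαβ : α • u = β • u' := by
      have : α • u + (-β) • u' = 0 := by rw [← hn]; exact hn0
      have := eq_neg_of_add_eq_zero_left this
      rw [this]; module
    have hnorm : ‖α • u‖ = ‖β • u'‖ := by rw [hαβ]
    rw [norm_smul, norm_smul, hu, hu'1] at hnorm
    simp only [mul_one, Real.norm_eq_abs] at hnorm
    have hαpos : 0 < α := by
      rcases lt_or_eq_of_le hu'v with h | h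
      · exact h
      · exfalso
        have habs : |β| = 0 := by rw [← hnorm, ← h]; simp
        have : β = 0 := abs_eq_zero.1 habs
        linarith
    have hαeq : α = -β := by
      rw [abs_of_pos hαpos, abs_of_neg huv] at hnorm
      linarith [hnorm]
    have huu' : u = (-1 : ℝ) • u' := by
      have h1 : α • u = α • ((-1 : ℝ) • u') := by
        rw [hαβ, smul_smul]
        congr 1
        linarith
      exact smul_right_injective _ (ne_of_gt hαpos) h1
    exfalso
    apply collinear_contra hA hu (c := ⟪u, x⟫)
    intro y hy
    have h1 := hxn y hy
    have h2 := hu'n y hy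
    have e1 : ⟪u, y⟫ = -⟪u', y⟫ := by rw [huu']; rw [real_inner_smul_left]; ring
    have e2 : ⟪u, x⟫ = -⟪u', x⟫ := by rw [huu']; rw [real_inner_smul_left]; ring
    rw [e1, e2]
    linarith
  · -- n is a nonzero normal at x orthogonal to v
    have hnn : IsExtNormal A n x := extNormal_add (extNormal_smul hu'v hxn)
      (extNormal_smul (by linarith : (0:ℝ) ≤ -β) hu'n)
    have hnv : ⟪n, v⟫ = 0 := by
      rw [hn, inner_add_left, real_inner_smul_left, real_inner_smul_left, ← hα, ← hβ]
      ring
    set m : Pt := ‖n‖⁻¹ • n with hm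
    have hm1 : ‖m‖ = 1 := norm_smul_inv_norm hn0
    have hmn : IsExtNormal A m x := extNormal_smul (by positivity) hnn
    have hmv : ⟪m, v⟫ = 0 := by
      rw [hm, real_inner_smul_left, hnv]; ring
    have hvm : ⟪v, m⟫ = 0 := by rw [real_inner_comm]; exact hmv
    have hrep : m = ⟪perp v, m⟫ • perp v := perp_span hv hvm
    set c : ℝ := ⟪perp v, m⟫ with hc
    have hcabs : |c| = 1 := by
      have : ‖m‖ = |c| * ‖perp v‖ := by rw [hrep, norm_smul]; rfl
      rw [hm1, norm_perp v hv] at this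
      simp at this
      linarith [this]
    have hc0 : c ≠ 0 := by
      intro h0; rw [h0] at hcabs; simp at hcabs
    rcases lt_or_gt_of_ne hc0 with hcneg | hcpos
    · -- m = c • w with c < 0 : x minimizes w, x = lPt
      left
      obtain ⟨hlm, hlmin⟩ := lPt_spec v A (nonempty_of_noncol hA)
      have hcard := hvA (-(perp v)) (by rw [norm_neg]; exact norm_perp v hv)
        (by rw [inner_neg_left, inner_perp_self]; ring)
      apply max_unique hcard hx hlm
      · intro z hz
        have h1 := hmn z hz
        rw [hrep, real_inner_smul_left, real_inner_smul_left] at h1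
        rw [inner_neg_left, inner_neg_left]
        have hzx : ⟪perp v, x⟫ ≤ ⟪perp v, z⟫ := by nlinarith [h1, hcneg]
        linarith
      · intro z hz
        rw [inner_neg_left, inner_neg_left]
        exact neg_le_neg (hlmin z hz)
    · -- c > 0 : x maximizes w, x = rPt
      right
      obtain ⟨hrm, hrmax⟩ := rPt_spec v A (nonempty_of_noncol hA)
      have hcard := hvA (perp v) (norm_perp v hv) (inner_perp_self v)
      apply max_unique hcard hx hrm
      · intro z hz
        have h1 := hmn z hz
        rw [hrep, real_inner_smul_left, real_inner_smul_left] at h1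
        exact le_of_mul_le_mul_left (by linarith [h1]) hcpos
      · exact hrmax
  
lemma perp_contra (hv : ‖v‖ = 1) (hA : ¬ Collinear ℝ (A : Set Pt))
    (hvA : NotParallelToSide v A) (hlow : lowerSet A v = ∅)
    {n : Pt} (hn : ‖n‖ = 1) (hnv : 0 < ⟪n, v⟫)
    (hnlA : IsExtNormal A n (lPt v A)) (hnd : ⟪n, rPt v A - lPt v A⟫ = 0) : False := by
  have hne := nonempty_of_noncol hA
  have hrl : ⟪n, rPt v A⟫ = ⟪n, lPt v A⟫ := by
    rw [inner_sub_right] at hnd; linarith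
  obtain ⟨x, hx, hxm⟩ := A.exists_max_image (fun y => ⟪-n, y⟫) hne
  have hxn : IsExtNormal A (-n) x := fun y hy => hxm y hy
  have hx' : x = lPt v A ∨ x = rPt v A :=
    lower_max_mem hv hA hvA hlow (by rw [norm_neg]; exact hn)
      (by rw [inner_neg_left]; linarith) hx hxn
  have hxval : ⟪n, x⟫ = ⟪n, lPt v A⟫ := by
    rcases hx' with h | h
    · rw [h]
    · rw [h, hrl]
  apply collinear_contra hA hn (c := ⟪n, lPt v A⟫)
  intro y hy
  have h1 := hnlA y hy
  have h2 := hxm y hy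
  simp only [inner_neg_left] at h2
  rw [hxval] at h2
  linarith

/-- pure real arithmetic of the sandwich argument. -/
lemma core_arith {nv nw mv mw dv dw ev ew : ℝ}
    (hνv : 0 < nv) (hμv : 0 < mv) (hdw : 0 < dw) (hew : 0 < ew)
    (hd1 : 0 ≤ nv * dv + nw * dw) (hd2 : mv * dv + mw * dw ≤ 0)
    (he1 : nv * ev + nw * ew ≤ 0) (he2 : 0 ≤ mv * ev + mw * ew) :
    nv * dv + nw * dw = 0 ∧ mv * dv + mw * dw = 0 ∧
      nv * ev + nw * ew = 0 ∧ mv * ev + mw * ew = 0 ∧ nv * mw = mv * nw := by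
  have hX1 : 0 ≤ nv * (dv * ew - ev * dw) := by nlinarith [mul_nonneg hd1 hew.le]
  have hX2 : mv * (dv * ew - ev * dw) ≤ 0 := by nlinarith [mul_nonneg he2 hdw.le]
  have hXge : 0 ≤ dv * ew - ev * dw := by nlinarith [hX1, hνv]
  have hXle : dv * ew - ev * dw ≤ 0 := by nlinarith [hX2, hμv]
  have hX0 : dv * ew - ev * dw = 0 := le_antisymm hXle hXge
  have hn0 : nv * dv + nw * dw = 0 := by
    have h1 : (nv * dv + nw * dw) * ew ≤ 0 := by nlinarith [hX0, he1, hdw]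
    have h2 : 0 ≤ (nv * dv + nw * dw) * ew := mul_nonneg hd1 hew.le
    have h3 : (nv * dv + nw * dw) * ew = 0 := le_antisymm h1 h2
    rcases mul_eq_zero.1 h3 with h | h
    · exact h
    · exact absurd h (ne_of_gt hew)
  have hm0 : mv * dv + mw * dw = 0 := by
    have h1 : 0 ≤ (mv * dv + mw * dw) * ew := by nlinarith [hX0, he2, hdw]
    have h2 : (mv * dv + mw * dw) * ew ≤ 0 := mul_nonpos_iff.2 (Or.inr ⟨hd2, hew.le⟩)
    have h3 : (mv * dv + mw * dw) * ew = 0 := le_antisymm h2 h1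
    rcases mul_eq_zero.1 h3 with h | h
    · exact h
    · exact absurd h (ne_of_gt hew)
  have hne0 : nv * ev + nw * ew = 0 := by
    have key : (nv * dv + nw * dw) * ew = nv * (dv * ew - ev * dw) + (nv * ev + nw * ew) * dw := by
      ring
    rw [hX0, hn0] at key
    simp only [mul_zero, zero_mul, zero_add] at key
    rcases mul_eq_zero.1 key.symm with h | h
    · exact h
    · exact absurd h (ne_of_gt hdw)
  have hme0 : mv * ev + mw * ew = 0 := by
    have key : (mv * dv + mw * dw) * ew = mv * (dv * ew - ev * dw) + (mv * ev + mw * ew) * dw := by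
      ring
    rw [hX0, hm0] at key
    simp only [mul_zero, zero_mul, zero_add] at key
    rcases mul_eq_zero.1 key.symm with h | h
    · exact h
    · exact absurd h (ne_of_gt hdw)
  refine ⟨hn0, hm0, hne0, hme0, ?_⟩
  have hc : nv * mw * dw = mv * nw * dw := by
    linear_combination nv * hm0 - mv * hn0
  exact mul_right_cancel₀ (ne_of_gt hdw) hc

/-- The core sandwich lemma. -/
lemma core (hv : ‖v‖ = 1) (hA : ¬ Collinear ℝ (A : Set Pt))
    (hvA : NotParallelToSide v A) (hlow : lowerSet A v = ∅)
    {μ ν e : Pt} (hμ1 : ‖μ‖ = 1) (hν1 : ‖ν‖ = 1)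
    (hμv : 0 < ⟪μ, v⟫) (hνv : 0 < ⟪ν, v⟫)
    (hμlA : IsExtNormal A μ (lPt v A))
    (hνd : 0 ≤ ⟪ν, rPt v A - lPt v A⟫)
    (hew : 0 < ⟪perp v, e⟫) (hνe : ⟪ν, e⟫ ≤ 0) (hμe : 0 ≤ ⟪μ, e⟫) : False := by
  have hne := nonempty_of_noncol hA
  have hdwpos : 0 < ⟪perp v, rPt v A - lPt v A⟫ := dw_pos hv hA
  have hd1 : 0 ≤ ⟪ν, v⟫ * ⟪v, rPt v A - lPt v A⟫ + ⟪ν, perp v⟫ * ⟪perp v, rPt v A - lPt v A⟫ := by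
    rw [← inner_decomp v hv]; exact hνd
  have hd2 : ⟪μ, v⟫ * ⟪v, rPt v A - lPt v A⟫ + ⟪μ, perp v⟫ * ⟪perp v, rPt v A - lPt v A⟫ ≤ 0 := by
    rw [← inner_decomp v hv]
    rw [inner_sub_right]
    have := hμlA (rPt v A) (rPt_spec v A hne).1
    linarith
  have he1 : ⟪ν, v⟫ * ⟪v, e⟫ + ⟪ν, perp v⟫ * ⟪perp v, e⟫ ≤ 0 := by
    rw [← inner_decomp v hv]; exact hνe
  have he2 : 0 ≤ ⟪μ, v⟫ * ⟪v, e⟫ + ⟪μ, perp v⟫ * ⟪perp v, e⟫ := by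
    rw [← inner_decomp v hv]; exact hμe
  obtain ⟨hn0, hm0, -, -, hcross⟩ := core_arith hνv hμv hdwpos hew hd1 hd2 he1 he2
  have hνμ : ν = μ := unit_eq_of_cross v hv hν1 hμ1 hνv hμv hcross
  have hνdz : ⟪ν, rPt v A - lPt v A⟫ = 0 := by
    rw [inner_decomp v hv ν (rPt v A - lPt v A)]; exact hn0
  exact perp_contra hv hA hvA hlow hν1 hνv (by rw [hνμ]; exact hμlA) hνdz

/-- The mirrored core sandwich lemma. -/
lemma coreR (hv : ‖v‖ = 1) (hA : ¬ Collinear ℝ (A : Set Pt))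
    (hvA : NotParallelToSide v A) (hlow : lowerSet A v = ∅)
    {μ ν e : Pt} (hμ1 : ‖μ‖ = 1) (hν1 : ‖ν‖ = 1)
    (hμv : 0 < ⟪μ, v⟫) (hνv : 0 < ⟪ν, v⟫)
    (hμrA : IsExtNormal A μ (rPt v A))
    (hνd : ⟪ν, rPt v A - lPt v A⟫ ≤ 0)
    (hew : 0 < ⟪perp v, e⟫) (hνe : 0 ≤ ⟪ν, e⟫) (hμe : ⟪μ, e⟫ ≤ 0) : False := by
  have hne := nonempty_of_noncol hA
  have hdwpos : 0 < ⟪perp v, rPt v A - lPt v A⟫ := dw_pos hv hA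
  have hd1 : ⟪ν, v⟫ * ⟪v, rPt v A - lPt v A⟫ + ⟪ν, perp v⟫ * ⟪perp v, rPt v A - lPt v A⟫ ≤ 0 := by
    rw [← inner_decomp v hv]; exact hνd
  have hd2 : 0 ≤ ⟪μ, v⟫ * ⟪v, rPt v A - lPt v A⟫ + ⟪μ, perp v⟫ * ⟪perp v, rPt v A - lPt v A⟫ := by
    rw [← inner_decomp v hv]
    rw [inner_sub_right]
    have := hμrA (lPt v A) (lPt_spec v A hne).1
    linarith
  have he1 : 0 ≤ ⟪ν, v⟫ * ⟪v, e⟫ + ⟪ν, perp v⟫ * ⟪perp v, e⟫ := by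
    rw [← inner_decomp v hv]; exact hνe
  have he2 : ⟪μ, v⟫ * ⟪v, e⟫ + ⟪μ, perp v⟫ * ⟪perp v, e⟫ ≤ 0 := by
    rw [← inner_decomp v hv]; exact hμe
  -- apply core_arith with the roles of d and e swapped
  obtain ⟨-, -, hn0, hm0, hcross⟩ := core_arith (nv := ⟪ν, v⟫) (nw := ⟪ν, perp v⟫)
    (mv := ⟪μ, v⟫) (mw := ⟪μ, perp v⟫) (dv := ⟪v, e⟫)
    (dw := ⟪perp v, e⟫) (ev := ⟪v, rPt v A - lPt v A⟫)
    (ew := ⟪perp v, rPt v A - lPt v A⟫) hνv hμv hew hdwpos he1 he2 hd1 hd2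
  have hνμ : ν = μ := unit_eq_of_cross v hv hν1 hμ1 hνv hμv hcross
  have hνdz : ⟪ν, rPt v A - lPt v A⟫ = 0 := by
    rw [inner_decomp v hv ν (rPt v A - lPt v A)]; exact hn0
  have hrl : ⟪ν, rPt v A⟫ = ⟪ν, lPt v A⟫ := by
    rw [inner_sub_right] at hνdz; linarith
  have hνlA : IsExtNormal A ν (lPt v A) := by
    intro y hy
    rw [← hrl]
    rw [hνμ]
    exact hμrA y hy
  exact perp_contra hv hA hvA hlow hν1 hνv hνlA hνdz

end ASide

end ULAux
namespace ULAux

lemma perp_perp (v : Pt) : perp (perp v) = -v := by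
  ext i
  fin_cases i
  · show (perp (perp v)) 0 = -(v 0)
    simp
  · show (perp (perp v)) 1 = -(v 1)
    simp

section BSide

variable {B : Finset Pt} {v : Pt}

lemma upper_normal {b : Pt} (hb : b ∈ upperSet B v) :
    b ∈ B ∧ ∃ ν : Pt, ‖ν‖ = 1 ∧ IsExtNormal B ν b ∧ 0 < ⟪ν, v⟫ := by
  rw [upperSet, Finset.mem_filter] at hb
  obtain ⟨hbB, ⟨u, hu0, hun⟩, hall⟩ := hb
  obtain ⟨n, hn1, hnn⟩ := exists_unit_normal hu0 hun
  exact ⟨hbB, n, hn1, hnn, hall n hn1 hnn⟩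

lemma lower_normal {b : Pt} (hb : b ∈ lowerSet B v) :
    b ∈ B ∧ ∃ ν : Pt, ‖ν‖ = 1 ∧ IsExtNormal B ν b ∧ ⟪ν, v⟫ < 0 := by
  rw [lowerSet, Finset.mem_filter] at hb
  obtain ⟨hbB, ⟨u, hu0, hun⟩, hall⟩ := hb
  obtain ⟨n, hn1, hnn⟩ := exists_unit_normal hu0 hun
  exact ⟨hbB, n, hn1, hnn, hall n hn1 hnn⟩

/-- two points with "upper" exterior normals and the same `w`-coordinate coincide. -/
lemma w_inj (hv : ‖v‖ = 1) {b b' ν ν' : Pt} (hb : b ∈ B) (hb' : b' ∈ B)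
    (hνn : IsExtNormal B ν b) (hνv : 0 < ⟪ν, v⟫)
    (hν'n : IsExtNormal B ν' b') (hν'v : 0 < ⟪ν', v⟫)
    (hw : ⟪perp v, b⟫ = ⟪perp v, b'⟫) : b = b' := by
  have hz : ⟪perp v, b - b'⟫ = 0 := by rw [inner_sub_right]; linarith
  have hspan := perp_span (norm_perp v hv) hz
  rw [perp_perp] at hspan
  have h1 : 0 ≤ ⟪ν, b - b'⟫ := by
    rw [inner_sub_right]
    have := hνn b' hb'
    linarith
  have h2 : ⟪ν', b - b'⟫ ≤ 0 := by
    rw [inner_sub_right]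
    have := hν'n b hb
    linarith
  rw [hspan] at h1 h2
  rw [real_inner_smul_right, inner_neg_right] at h1 h2
  have hcle : ⟪-v, b - b'⟫ ≤ 0 := by nlinarith [h1, hνv]
  have hcge : 0 ≤ ⟪-v, b - b'⟫ := by nlinarith [h2, hν'v]
  have hc0 : ⟪-v, b - b'⟫ = 0 := le_antisymm hcle hcge
  have : b - b' = 0 := by rw [hspan, hc0]; simp
  exact sub_eq_zero.1 this

lemma rPt_not_upper (hv : ‖v‖ = 1) (hBne : B.Nonempty) : rPt v B ∉ upperSet B v := by
  intro hmem
  rw [upperSet, Finset.mem_filter] at hmem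
  obtain ⟨-, -, hall⟩ := hmem
  have := hall (perp v) (norm_perp v hv) (fun y hy => (rPt_spec v B hBne).2 y hy)
  rw [inner_perp_self] at this
  exact lt_irrefl _ this

lemma lPt_not_upper (hv : ‖v‖ = 1) (hBne : B.Nonempty) : lPt v B ∉ upperSet B v := by
  intro hmem
  rw [upperSet, Finset.mem_filter] at hmem
  obtain ⟨-, -, hall⟩ := hmem
  have := hall (-(perp v)) (by rw [norm_neg]; exact norm_perp v hv)
    (fun y hy => by
      rw [inner_neg_left, inner_neg_left]
      exact neg_le_neg ((lPt_spec v B hBne).2 y hy))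
  rw [inner_neg_left, inner_perp_self] at this
  norm_num at this

lemma rPt_not_lower (hv : ‖v‖ = 1) (hBne : B.Nonempty) : rPt v B ∉ lowerSet B v := by
  intro hmem
  rw [lowerSet, Finset.mem_filter] at hmem
  obtain ⟨-, -, hall⟩ := hmem
  have := hall (perp v) (norm_perp v hv) (fun y hy => (rPt_spec v B hBne).2 y hy)
  rw [inner_perp_self] at this
  exact lt_irrefl _ this

lemma lPt_not_lower (hv : ‖v‖ = 1) (hBne : B.Nonempty) : lPt v B ∉ lowerSet B v := by
  intro hmem
  rw [lowerSet, Finset.mem_filter] at hmem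
  obtain ⟨-, -, hall⟩ := hmem
  have := hall (-(perp v)) (by rw [norm_neg]; exact norm_perp v hv)
    (fun y hy => by
      rw [inner_neg_left, inner_neg_left]
      exact neg_le_neg ((lPt_spec v B hBne).2 y hy))
  rw [inner_neg_left, inner_perp_self] at this
  norm_num at this

lemma w_lt_rPt (hv : ‖v‖ = 1) (hvB : NotParallelToSide v B) (hBne : B.Nonempty)
    {y : Pt} (hy : y ∈ B) (hne : y ≠ rPt v B) : ⟪perp v, y⟫ < ⟪perp v, rPt v B⟫ := by
  obtain ⟨hrm, hrmax⟩ := rPt_spec v B hBne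
  rcases lt_or_eq_of_le (hrmax y hy) with h | h
  · exact h
  · exfalso
    apply hne
    apply max_unique (hvB (perp v) (norm_perp v hv) (inner_perp_self v)) hy hrm
    · intro z hz
      rw [h]
      exact hrmax z hz
    · exact hrmax

lemma lPt_lt_w (hv : ‖v‖ = 1) (hvB : NotParallelToSide v B) (hBne : B.Nonempty)
    {y : Pt} (hy : y ∈ B) (hne : y ≠ lPt v B) : ⟪perp v, lPt v B⟫ < ⟪perp v, y⟫ := by
  obtain ⟨hlm, hlmin⟩ := lPt_spec v B hBne
  rcases lt_or_eq_of_le (hlmin y hy) with h | h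
  · exact h
  · exfalso
    apply hne
    have hcard := hvB (-(perp v)) (by rw [norm_neg]; exact norm_perp v hv)
      (by rw [inner_neg_left, inner_perp_self]; ring)
    apply max_unique hcard hy hlm
    · intro z hz
      rw [inner_neg_left, inner_neg_left, ← h]
      exact neg_le_neg (hlmin z hz)
    · intro z hz
      rw [inner_neg_left, inner_neg_left]
      exact neg_le_neg (hlmin z hz)

end BSide

end ULAux
namespace ULAux

/-- arithmetic for deducing parallelism of `d` and `D` at equality. -/
lemma ii_arith {a1 a2 b1 b2 dv dw Dv Dw : ℝ}
    (ha1 : a1 < 0) (hb1 : b1 < 0) (hdw : 0 < dw) (hDw : 0 < Dw)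
    (h1 : a1 * dv + a2 * dw ≤ 0) (h2 : 0 ≤ a1 * Dv + a2 * Dw)
    (h3 : 0 ≤ b1 * dv + b2 * dw) (h4 : b1 * Dv + b2 * Dw ≤ 0) :
    dv * Dw = Dv * dw ∧ a1 * dv + a2 * dw = 0 ∧ b1 * dv + b2 * dw = 0 := by
  have hXge : 0 ≤ dv * Dw - Dv * dw := by nlinarith [mul_nonneg (neg_nonneg.2 h1) hDw.le, mul_nonneg h2 hdw.le]
  have hXle : dv * Dw - Dv * dw ≤ 0 := by nlinarith [mul_nonneg h3 hDw.le, mul_nonneg (neg_nonneg.2 h4) hdw.le]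
  have hX0 : dv * Dw - Dv * dw = 0 := le_antisymm hXle hXge
  have e1 : a1 * dv + a2 * dw = 0 := by
    have key : (a1 * dv + a2 * dw) * Dw = a1 * (dv * Dw - Dv * dw) + (a1 * Dv + a2 * Dw) * dw := by
      ring
    rw [hX0] at key
    have hge : 0 ≤ (a1 * dv + a2 * dw) * Dw := by nlinarith [mul_nonneg h2 hdw.le]
    have hle : (a1 * dv + a2 * dw) * Dw ≤ 0 := mul_nonpos_iff.2 (Or.inr ⟨h1, hDw.le⟩)
    have h0 : (a1 * dv + a2 * dw) * Dw = 0 := le_antisymm hle hge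
    rcases mul_eq_zero.1 h0 with h | h
    · exact h
    · exact absurd h (ne_of_gt hDw)
  have e2 : b1 * dv + b2 * dw = 0 := by
    have key : (b1 * dv + b2 * dw) * Dw = b1 * (dv * Dw - Dv * dw) + (b1 * Dv + b2 * Dw) * dw := by
      ring
    rw [hX0] at key
    have hle : (b1 * dv + b2 * dw) * Dw ≤ 0 := by nlinarith [mul_nonneg (neg_nonneg.2 h4) hdw.le]
    have hge : 0 ≤ (b1 * dv + b2 * dw) * Dw := mul_nonneg h3 hDw.le
    have h0 : (b1 * dv + b2 * dw) * Dw = 0 := le_antisymm hle hge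
    rcases mul_eq_zero.1 h0 with h | h
    · exact h
    · exact absurd h (ne_of_gt hDw)
  exact ⟨by linarith [hX0], e1, e2⟩

lemma i_arith_r {x1 x2 a1 a2 dv dw gv gw : ℝ}
    (hx1 : x1 < 0) (ha1 : a1 < 0) (hdw : 0 < dw) (hgw : 0 < gw)
    (hxd : x1 * dv + x2 * dw ≤ 0) (hxg : 0 ≤ x1 * gv + x2 * gw)
    (had : a1 * dv + a2 * dw = 0) (hag : a1 * gv + a2 * gw < 0) : False := by
  have h1 : x1 * (dv * gw - gv * dw) ≤ 0 := by
    nlinarith [mul_nonneg (neg_nonneg.2 hxd) hgw.le, mul_nonneg hxg hdw.le]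
  have hXge : 0 ≤ dv * gw - gv * dw := by nlinarith [h1, hx1]
  have h2 : a1 * (gv * dw - dv * gw) < 0 := by
    have e : a1 * (gv * dw - dv * gw) = (a1 * gv + a2 * gw) * dw - (a1 * dv + a2 * dw) * gw := by
      ring
    rw [e, had]
    have := mul_neg_of_neg_of_pos hag hdw
    linarith
  have h3 : 0 < gv * dw - dv * gw := by nlinarith [h2, ha1]
  linarith

lemma i_arith_l {x1 x2 a1 a2 dv dw gv gw : ℝ}
    (hx1 : x1 < 0) (ha1 : a1 < 0) (hdw : 0 < dw) (hgw : 0 < gw)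
    (hxd : 0 ≤ x1 * dv + x2 * dw) (hxg : x1 * gv + x2 * gw ≤ 0)
    (had : a1 * dv + a2 * dw = 0) (hag : 0 < a1 * gv + a2 * gw) : False := by
  have h1 : 0 ≤ x1 * (dv * gw - gv * dw) := by
    nlinarith [mul_nonneg hxd hgw.le, mul_nonneg (neg_nonneg.2 hxg) hdw.le]
  have hXle : dv * gw - gv * dw ≤ 0 := by nlinarith [h1, hx1]
  have h2 : 0 < a1 * (gv * dw - dv * gw) := by
    have e : a1 * (gv * dw - dv * gw) = (a1 * gv + a2 * gw) * dw - (a1 * dv + a2 * dw) * gw := by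
      ring
    rw [e, had]
    have := mul_pos hag hdw
    linarith
  have h3 : gv * dw - dv * gw < 0 := by nlinarith [h2, ha1]
  linarith

end ULAux
set_option maxHeartbeats 2000000 in
theorem upperlower_segment
    (A B : Finset Pt) (hA : ¬ Collinear ℝ (A : Set Pt)) (hB : ¬ Collinear ℝ (B : Set Pt))
    (v : Pt) (hv : ‖v‖ = 1)
    (hvA : NotParallelToSide v A) (hvB : NotParallelToSide v B)
    (hlow : lowerSet A v = ∅) :
    (intCard (A + B) : ℤ) ≥ ((upperSet B v).card : ℤ) - 2 ∧
      ((intCard (A + B) : ℤ) = ((upperSet B v).card : ℤ) - 2 →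
        ((lowerSet B v : Set Pt) ⊆ segment ℝ (lPt v B) (rPt v B)) ∧
          ((∃ c : ℝ, rPt v A - lPt v A = c • (rPt v B - lPt v B)) ∨
            (∃ c : ℝ, rPt v B - lPt v B = c • (rPt v A - lPt v A)))) := by
  classical
  have hAne : A.Nonempty := ULAux.nonempty_of_noncol hA
  have hBne : B.Nonempty := ULAux.nonempty_of_noncol hB
  have hint : (interior (convexHull ℝ ((A + B : Finset Pt) : Set Pt))).Nonempty :=
    ULAux.interior_sum_nonempty hA hBne
  have hlAm : lPt v A ∈ A := (ULAux.lPt_spec v A hAne).1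
  have hrAm : rPt v A ∈ A := (ULAux.rPt_spec v A hAne).1
  have hlBm : lPt v B ∈ B := (ULAux.lPt_spec v B hBne).1
  have hrBm : rPt v B ∈ B := (ULAux.rPt_spec v B hBne).1
  set U : Finset Pt := upperSet B v with hU
  set Badl : Finset Pt := U.filter
      (fun b => ∃ u : Pt, ‖u‖ = 1 ∧ IsExtNormal A u (lPt v A) ∧ IsExtNormal B u b) with hBadl
  set Badr : Finset Pt := U.filter
      (fun b => ∃ u : Pt, ‖u‖ = 1 ∧ IsExtNormal A u (rPt v A) ∧ IsExtNormal B u b) with hBadr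
  set S1 : Finset Pt := (U \ Badl).image (fun b => lPt v A + b) with hS1
  set S2 : Finset Pt := (Badl \ Badr).image (fun b => rPt v A + b) with hS2
  set F : Finset Pt := (A + B).filter
      (fun x => x ∈ interior (convexHull ℝ ((A + B : Finset Pt) : Set Pt))) with hF
  have hFcard : intCard (A + B) = F.card := rfl
  have hUB : U ⊆ B := Finset.filter_subset _ _
  have hBadlU : Badl ⊆ U := Finset.filter_subset _ _
  have hBadrU : Badr ⊆ U := Finset.filter_subset _ _
  have hupp : ∀ {b u : Pt}, b ∈ U → ‖u‖ = 1 → IsExtNormal B u b → 0 < ⟪u, v⟫ := by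
    intro b u hbU hu1 hub
    rw [hU, upperSet, Finset.mem_filter] at hbU
    exact hbU.2.2 u hu1 hub
  have huppex : ∀ {b : Pt}, b ∈ U → ∃ ν : Pt, ‖ν‖ = 1 ∧ IsExtNormal B ν b ∧ 0 < ⟪ν, v⟫ := by
    intro b hbU
    exact (ULAux.upper_normal (by rw [hU] at hbU; exact hbU)).2
  -- interiority of the elements of S1 and S2
  have hS1int : ∀ b ∈ U \ Badl,
      lPt v A + b ∈ interior (convexHull ℝ ((A + B : Finset Pt) : Set Pt)) := by
    intro b hbmem
    rw [Finset.mem_sdiff] at hbmem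
    obtain ⟨hbU, hbnot⟩ := hbmem
    refine ULAux.sum_mem_interior hint hlAm (hUB hbU) (fun u hu1 hua hub => hbnot ?_)
    rw [hBadl]
    exact Finset.mem_filter.2 ⟨hbU, u, hu1, hua, hub⟩
  have hS2int : ∀ b ∈ Badl \ Badr,
      rPt v A + b ∈ interior (convexHull ℝ ((A + B : Finset Pt) : Set Pt)) := by
    intro b hbmem
    rw [Finset.mem_sdiff] at hbmem
    obtain ⟨hbL, hbnot⟩ := hbmem
    refine ULAux.sum_mem_interior hint hrAm (hUB (hBadlU hbL)) (fun u hu1 hua hub => hbnot ?_)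
    rw [hBadr]
    exact Finset.mem_filter.2 ⟨hBadlU hbL, u, hu1, hua, hub⟩
  have hS1sub : S1 ⊆ F := by
    intro x hx
    rw [hS1, Finset.mem_image] at hx
    obtain ⟨b, hb, rfl⟩ := hx
    rw [hF, Finset.mem_filter]
    exact ⟨Finset.add_mem_add hlAm (hUB (Finset.mem_sdiff.1 hb).1), hS1int b hb⟩
  have hS2sub : S2 ⊆ F := by
    intro x hx
    rw [hS2, Finset.mem_image] at hx
    obtain ⟨b, hb, rfl⟩ := hx
    rw [hF, Finset.mem_filter]
    exact ⟨Finset.add_mem_add hrAm (hUB (hBadlU (Finset.mem_sdiff.1 hb).1)), hS2int b hb⟩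
  -- cardinalities
  have hS1card : S1.card = (U \ Badl).card := by
    rw [hS1]
    exact Finset.card_image_of_injective _ (add_right_injective _)
  have hS2card : S2.card = (Badl \ Badr).card := by
    rw [hS2]
    exact Finset.card_image_of_injective _ (add_right_injective _)
  have hsplit1 : (U \ Badl).card + Badl.card = U.card :=
    Finset.card_sdiff_add_card_eq_card hBadlU
  have hsplit2 : (Badl \ Badr).card + (Badl ∩ Badr).card = Badl.card :=
    Finset.card_sdiff_add_card_inter Badl Badr
  -- at most one simultaneously bad point
  have hBB : (Badl ∩ Badr).card ≤ 1 := by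
    rw [Finset.card_le_one]
    intro b hbm b' hbm'
    rw [Finset.mem_inter] at hbm hbm'
    obtain ⟨hbl, hbr⟩ := hbm
    obtain ⟨hbl', hbr'⟩ := hbm'
    have hbU : b ∈ U := hBadlU hbl
    have hbU' : b' ∈ U := hBadlU hbl'
    rw [hBadl, Finset.mem_filter] at hbl hbl'
    rw [hBadr, Finset.mem_filter] at hbr hbr'
    obtain ⟨-, u1, hu11, hu1A, hu1B⟩ := hbl
    obtain ⟨-, u2, hu21, hu2A, hu2B⟩ := hbr
    obtain ⟨-, u1', hu1'1, hu1'A, hu1'B⟩ := hbl'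
    obtain ⟨-, u2', hu2'1, hu2'A, hu2'B⟩ := hbr'
    have key : ∀ (b1 b2 μ2 ν1 : Pt), b1 ∈ U → b2 ∈ U →
        ‖μ2‖ = 1 → IsExtNormal A μ2 (lPt v A) → IsExtNormal B μ2 b2 →
        ‖ν1‖ = 1 → IsExtNormal A ν1 (rPt v A) → IsExtNormal B ν1 b1 →
        ⟪perp v, b1⟫ < ⟪perp v, b2⟫ → False := by
      intro b1 b2 μ2 ν1 hb1U hb2U hμ21 hμ2A hμ2B hν11 hν1A hν1B hlt
      have hμ2v : 0 < ⟪μ2, v⟫ := hupp hb2U hμ21 hμ2B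
      have hν1v : 0 < ⟪ν1, v⟫ := hupp hb1U hν11 hν1B
      refine ULAux.core hv hA hvA hlow hμ21 hν11 hμ2v hν1v hμ2A ?_
        (e := b2 - b1) ?_ ?_ ?_
      · rw [inner_sub_right]
        exact sub_nonneg.2 (hν1A (lPt v A) hlAm)
      · rw [inner_sub_right]; linarith
      · rw [inner_sub_right]
        exact sub_nonpos.2 (hν1B b2 (hUB hb2U))
      · rw [inner_sub_right]
        exact sub_nonneg.2 (hμ2B b1 (hUB hb1U))
    rcases lt_trichotomy ⟪perp v, b⟫ ⟪perp v, b'⟫ with h | h | h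
    · exact absurd (key b b' u1' u2 hbU hbU' hu1'1 hu1'A hu1'B hu21 hu2A hu2B h) id
    · obtain ⟨ν, hν1, hνB, hνv⟩ := huppex hbU
      obtain ⟨ν', hν'1, hν'B, hν'v⟩ := huppex hbU'
      exact ULAux.w_inj hv (hUB hbU) (hUB hbU') hνB hνv hν'B hν'v h
    · exact absurd (key b' b u1 u2' hbU' hbU hu11 hu1A hu1B hu2'1 hu2'A hu2'B h) id
  -- at most one collision between S1 and S2
  have hS12 : (S1 ∩ S2).card ≤ 1 := by
    rw [Finset.card_le_one]
    intro z hzm z' hzm'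
    rw [Finset.mem_inter] at hzm hzm'
    obtain ⟨hz1, hz2⟩ := hzm
    obtain ⟨hz1', hz2'⟩ := hzm'
    rw [hS1, Finset.mem_image] at hz1 hz1'
    rw [hS2, Finset.mem_image] at hz2 hz2'
    obtain ⟨b1, hb1m, hb1e⟩ := hz1
    obtain ⟨b1', hb1'm, hb1'e⟩ := hz2
    obtain ⟨b2, hb2m, hb2e⟩ := hz1'
    obtain ⟨b2', hb2'm, hb2'e⟩ := hz2'
    rw [Finset.mem_sdiff] at hb1m hb1'm hb2m hb2'm
    by_contra hne
    have hd1 : b1 = b1' + (rPt v A - lPt v A) := by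
      have h := hb1'e.trans hb1e.symm
      apply add_left_cancel (a := lPt v A)
      rw [← h]; abel
    have hd2 : b2 = b2' + (rPt v A - lPt v A) := by
      have h := hb2'e.trans hb2e.symm
      apply add_left_cancel (a := lPt v A)
      rw [← h]; abel
    have hb1U : b1 ∈ U := hb1m.1
    have hb2U : b2 ∈ U := hb2m.1
    have hb1'U : b1' ∈ U := hBadlU hb1'm.1
    have hb2'U : b2' ∈ U := hBadlU hb2'm.1
    have key : ∀ (c1 c1' c2 c2' : Pt), c1 ∈ U → c2 ∈ U →
        c1 = c1' + (rPt v A - lPt v A) → c1' ∈ B →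
        c2' ∈ Badl → c2 = c2' + (rPt v A - lPt v A) →
        ⟪perp v, c1'⟫ < ⟪perp v, c2'⟫ → False := by
      intro c1 c1' c2 c2' hc1U hc2U hc1eq hc1'B hc2'L hc2eq hlt
      obtain ⟨ν, hν1, hνB, hνv⟩ := huppex hc1U
      have hc2'U : c2' ∈ U := hBadlU hc2'L
      rw [hBadl, Finset.mem_filter] at hc2'L
      obtain ⟨-, μ, hμ1, hμA, hμB⟩ := hc2'L
      have hμv : 0 < ⟪μ, v⟫ := hupp hc2'U hμ1 hμB
      have hee' : c2' - c1' = c2 - c1 := by rw [hc1eq, hc2eq]; abel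
      refine ULAux.core hv hA hvA hlow hμ1 hν1 hμv hνv hμA ?_ (e := c2' - c1') ?_ ?_ ?_
      · have h := hνB c1' hc1'B
        rw [hc1eq] at h
        have h2 : ⟪ν, c1'⟫ ≤ ⟪ν, c1'⟫ + ⟪ν, rPt v A - lPt v A⟫ := by
          rw [← inner_add_right]; exact h
        linarith
      · rw [inner_sub_right]; linarith
      · rw [hee', inner_sub_right]
        exact sub_nonpos.2 (hνB c2 (hUB hc2U))
      · rw [inner_sub_right]
        exact sub_nonneg.2 (hμB c1' hc1'B)
    rcases lt_trichotomy ⟪perp v, b1'⟫ ⟪perp v, b2'⟫ with h | h | h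
    · exact key b1 b1' b2 b2' hb1U hb2U hd1 (hUB hb1'U) hb2'm.1 hd2 h
    · obtain ⟨ν, hν1, hνB, hνv⟩ := huppex hb1'U
      obtain ⟨ν', hν'1, hν'B, hν'v⟩ := huppex hb2'U
      have := ULAux.w_inj hv (hUB hb1'U) (hUB hb2'U) hνB hνv hν'B hν'v h
      exact hne (by rw [← hb1'e, ← hb2'e, this])
    · exact key b2 b2' b1 b1' hb2U hb1U hd2 (hUB hb2'U) hb1'm.1 hd1 h
  -- counting
  have hFS : (S1 ∪ S2).card ≤ F.card :=
    Finset.card_le_card (Finset.union_subset hS1sub hS2sub)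
  have hunion : (S1 ∪ S2).card + (S1 ∩ S2).card = S1.card + S2.card :=
    Finset.card_union_add_card_inter S1 S2
  have hcount : U.card ≤ F.card + 2 := by omega
  constructor
  · rw [hFcard]
    omega
  · intro heq
    rw [hFcard] at heq
    have hBBne : (Badl ∩ Badr).Nonempty := Finset.card_pos.1 (by omega)
    have hS12ne : (S1 ∩ S2).Nonempty := Finset.card_pos.1 (by omega)
    have hFeq : S1 ∪ S2 = F :=
      Finset.eq_of_subset_of_card_le (Finset.union_subset hS1sub hS2sub) (by omega)
    -- classification of interior points of A + B
    have hclass : ∀ {x : Pt}, x ∈ A + B →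
        x ∈ interior (convexHull ℝ ((A + B : Finset Pt) : Set Pt)) →
        (∃ b ∈ U \ Badl, x = lPt v A + b) ∨ (∃ b ∈ Badl \ Badr, x = rPt v A + b) := by
      intro x hx hxint
      have hxF : x ∈ F := by rw [hF, Finset.mem_filter]; exact ⟨hx, hxint⟩
      rw [← hFeq, Finset.mem_union] at hxF
      rcases hxF with h | h
      · rw [hS1, Finset.mem_image] at h
        obtain ⟨b, hb, he⟩ := h
        exact Or.inl ⟨b, hb, he.symm⟩
      · rw [hS2, Finset.mem_image] at h
        obtain ⟨b, hb, he⟩ := h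
        exact Or.inr ⟨b, hb, he.symm⟩
    -- the doubly bad point bs
    obtain ⟨bs, hbs⟩ := hBBne
    rw [Finset.mem_inter] at hbs
    have hbsU : bs ∈ U := hBadlU hbs.1
    have hbsl := hbs.1
    have hbsr := hbs.2
    rw [hBadl, Finset.mem_filter] at hbsl
    rw [hBadr, Finset.mem_filter] at hbsr
    obtain ⟨-, usl, husl1, huslA, huslB⟩ := hbsl
    obtain ⟨-, usr, husr1, husrA, husrB⟩ := hbsr
    have huslv : 0 < ⟪usl, v⟫ := hupp hbsU husl1 huslB
    have husrv : 0 < ⟪usr, v⟫ := hupp hbsU husr1 husrB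
    -- the collision pair bh = bh' + d
    obtain ⟨z0, hz0⟩ := hS12ne
    rw [Finset.mem_inter] at hz0
    have hz01 := hz0.1
    have hz02 := hz0.2
    rw [hS1, Finset.mem_image] at hz01
    rw [hS2, Finset.mem_image] at hz02
    obtain ⟨bh, hbhm, hbhe⟩ := hz01
    obtain ⟨bh', hbh'm, hbh'e⟩ := hz02
    rw [Finset.mem_sdiff] at hbhm hbh'm
    have hbhU : bh ∈ U := hbhm.1
    have hbh'U : bh' ∈ U := hBadlU hbh'm.1
    have hbhd : bh = bh' + (rPt v A - lPt v A) := by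
      have h := hbh'e.trans hbhe.symm
      apply add_left_cancel (a := lPt v A)
      rw [← h]; abel
    obtain ⟨nuh, hnuh1, hnuhB, hnuhv⟩ := huppex hbhU
    have hnuhd : 0 ≤ ⟪nuh, rPt v A - lPt v A⟫ := by
      have h := hnuhB bh' (hUB hbh'U)
      rw [hbhd, inner_add_right] at h
      linarith
    have hbh'L := hbh'm.1
    rw [hBadl, Finset.mem_filter] at hbh'L
    obtain ⟨-, muh, hmuh1, hmuhA, hmuhB⟩ := hbh'L
    have hmuhv : 0 < ⟪muh, v⟫ := hupp hbh'U hmuh1 hmuhB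
    -- strict w facts for members of U
    have hU_ne_rB : ∀ {b : Pt}, b ∈ U → b ≠ rPt v B := by
      intro b hbU h
      apply ULAux.rPt_not_upper hv hBne
      rw [← h, ← hU]
      exact hbU
    have hU_ne_lB : ∀ {b : Pt}, b ∈ U → b ≠ lPt v B := by
      intro b hbU h
      apply ULAux.lPt_not_upper hv hBne
      rw [← h, ← hU]
      exact hbU
    -- Step (alpha): a common exterior normal of A at lA and of B at rB
    have hz2n : ∃ uu : Pt, ‖uu‖ = 1 ∧ IsExtNormal A uu (lPt v A) ∧
        IsExtNormal B uu (rPt v B) := by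
      by_cases hz2int : lPt v A + rPt v B ∈
          interior (convexHull ℝ ((A + B : Finset Pt) : Set Pt))
      · exfalso
        rcases hclass (Finset.add_mem_add hlAm hrBm) hz2int with ⟨b, hbm, he⟩ | ⟨b'', hbm'', he⟩
        · have hbe : rPt v B = b := add_left_cancel he
          rw [Finset.mem_sdiff] at hbm
          exact hU_ne_rB hbm.1 hbe.symm
        · rw [Finset.mem_sdiff] at hbm''
          have hb''L := hbm''.1
          have hb''U : b'' ∈ U := hBadlU hb''L
          rw [hBadl, Finset.mem_filter] at hb''L
          obtain ⟨-, μ, hμ1, hμA, hμB⟩ := hb''L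
          have hμv : 0 < ⟪μ, v⟫ := hupp hb''U hμ1 hμB
          have hb''e : b'' = rPt v B - (rPt v A - lPt v A) := by
            apply add_left_cancel (a := rPt v A)
            rw [← he]; abel
          have hee : b'' - bh' = rPt v B - bh := by rw [hb''e, hbhd]; abel
          refine ULAux.core hv hA hvA hlow hμ1 hnuh1 hμv hnuhv hμA hnuhd
            (e := b'' - bh') ?_ ?_ ?_
          · rw [hee, inner_sub_right]
            have h1 := ULAux.w_lt_rPt hv hvB hBne (hUB hbhU) (hU_ne_rB hbhU)
            linarith
          · rw [hee, inner_sub_right]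
            exact sub_nonpos.2 (hnuhB (rPt v B) hrBm)
          · rw [inner_sub_right]
            exact sub_nonneg.2 (hμB bh' (hUB hbh'U))
      · obtain ⟨uu, huu1, huu⟩ := ULAux.exists_unit_support hint hz2int
        refine ⟨uu, huu1, fun y hy => ?_, fun y hy => ?_⟩
        · have h := huu (y + rPt v B) (Finset.add_mem_add hy hrBm)
          rw [inner_add_right, inner_add_right] at h; linarith
        · have h := huu (lPt v A + y) (Finset.add_mem_add hlAm hy)
          rw [inner_add_right, inner_add_right] at h; linarith
    obtain ⟨uh, huh1, huhA, huhB⟩ := hz2n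
    -- `u = ±(perp v)` for unit u orthogonal to v
    have hpm : ∀ {u : Pt}, ‖u‖ = 1 → ⟪u, v⟫ = 0 → u = perp v ∨ u = -(perp v) := by
      intro u hu1 huv0
      have hvu : ⟪v, u⟫ = 0 := by rw [real_inner_comm]; exact huv0
      have hrep := ULAux.perp_span hv hvu
      have habs : |⟪perp v, u⟫| = 1 := by
        have h1 : ‖u‖ = ‖⟪perp v, u⟫ • perp v‖ := by rw [← hrep]
        rw [norm_smul, ULAux.norm_perp v hv, Real.norm_eq_abs, mul_one, hu1] at h1
        exact h1.symm
      rcases abs_eq (le_of_lt one_pos) |>.1 habs with h | h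
      · left; rw [hrep, h, one_smul]
      · right; rw [hrep, h, neg_one_smul]
    have huhv_lt : ⟪uh, v⟫ < 0 := by
      rcases lt_trichotomy ⟪uh, v⟫ 0 with h | h | h
      · exact h
      · exfalso
        rcases hpm huh1 h with he | he
        · have h1 := huhA (rPt v A) hrAm
          rw [he] at h1
          linarith [ULAux.wlr hv hA]
        · have h1 := huhB (lPt v B) hlBm
          rw [he, inner_neg_left, inner_neg_left] at h1
          linarith [ULAux.wlr hv hB]
      · exfalso
        refine ULAux.coreR hv hA hvA hlow husr1 huh1 husrv h husrA ?_
          (e := rPt v B - bs) ?_ ?_ ?_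
        · rw [inner_sub_right]
          have h1 := huhA (rPt v A) hrAm
          linarith
        · rw [inner_sub_right]
          have h1 := ULAux.w_lt_rPt hv hvB hBne (hUB hbsU) (hU_ne_rB hbsU)
          linarith
        · rw [inner_sub_right]
          exact sub_nonneg.2 (huhB bs (hUB hbsU))
        · rw [inner_sub_right]
          exact sub_nonpos.2 (husrB (rPt v B) hrBm)
    -- Step (beta): a common exterior normal of A at rA and of B at lB
    have hz1n : ∃ uu : Pt, ‖uu‖ = 1 ∧ IsExtNormal A uu (rPt v A) ∧
        IsExtNormal B uu (lPt v B) := by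
      by_cases hz1int : rPt v A + lPt v B ∈
          interior (convexHull ℝ ((A + B : Finset Pt) : Set Pt))
      · exfalso
        rcases hclass (Finset.add_mem_add hrAm hlBm) hz1int with ⟨b, hbm, he⟩ | ⟨b'', hbm'', he⟩
        · rw [Finset.mem_sdiff] at hbm
          have hbeq : b = lPt v B + (rPt v A - lPt v A) := by
            apply add_left_cancel (a := lPt v A)
            rw [← he]; abel
          obtain ⟨ν, hν1, hνB, hνv⟩ := huppex hbm.1
          refine ULAux.core hv hA hvA hlow hmuh1 hν1 hmuhv hνv hmuhA ?_
            (e := bh' - lPt v B) ?_ ?_ ?_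
          · have h1 := hνB (lPt v B) hlBm
            rw [hbeq, inner_add_right] at h1
            linarith
          · rw [inner_sub_right]
            have h1 := ULAux.lPt_lt_w hv hvB hBne (hUB hbh'U) (hU_ne_lB hbh'U)
            linarith
          · have hee : bh' - lPt v B = bh - b := by rw [hbhd, hbeq]; abel
            rw [hee, inner_sub_right]
            exact sub_nonpos.2 (hνB bh (hUB hbhU))
          · rw [inner_sub_right]
            exact sub_nonneg.2 (hmuhB (lPt v B) hlBm)
        · have hbe : lPt v B = b'' := add_left_cancel he
          rw [Finset.mem_sdiff] at hbm''
          exact hU_ne_lB (hBadlU hbm''.1) hbe.symm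
      · obtain ⟨uu, huu1, huu⟩ := ULAux.exists_unit_support hint hz1int
        refine ⟨uu, huu1, fun y hy => ?_, fun y hy => ?_⟩
        · have h := huu (y + lPt v B) (Finset.add_mem_add hy hlBm)
          rw [inner_add_right, inner_add_right] at h; linarith
        · have h := huu (rPt v A + y) (Finset.add_mem_add hrAm hy)
          rw [inner_add_right, inner_add_right] at h; linarith
    obtain ⟨uh', huh'1, huh'A, huh'B⟩ := hz1n
    have huh'v_lt : ⟪uh', v⟫ < 0 := by
      rcases lt_trichotomy ⟪uh', v⟫ 0 with h | h | h
      · exact h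
      · exfalso
        rcases hpm huh'1 h with he | he
        · have h1 := huh'B (rPt v B) hrBm
          rw [he] at h1
          linarith [ULAux.wlr hv hB]
        · have h1 := huh'A (lPt v A) hlAm
          rw [he, inner_neg_left, inner_neg_left] at h1
          linarith [ULAux.wlr hv hA]
      · exfalso
        refine ULAux.core hv hA hvA hlow hmuh1 huh'1 hmuhv h hmuhA ?_
          (e := bh' - lPt v B) ?_ ?_ ?_
        · rw [inner_sub_right]
          have h1 := huh'A (lPt v A) hlAm
          linarith
        · rw [inner_sub_right]
          have h1 := ULAux.lPt_lt_w hv hvB hBne (hUB hbh'U) (hU_ne_lB hbh'U)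
          linarith
        · rw [inner_sub_right]
          exact sub_nonpos.2 (huh'B bh' (hUB hbh'U))
        · rw [inner_sub_right]
          exact sub_nonneg.2 (hmuhB (lPt v B) hlBm)
    -- coordinates of d and D
    have hdw : 0 < ⟪perp v, rPt v A - lPt v A⟫ := ULAux.dw_pos hv hA
    have hDw : 0 < ⟪perp v, rPt v B - lPt v B⟫ := ULAux.dw_pos hv hB
    have hd1 : ⟪uh, v⟫ * ⟪v, rPt v A - lPt v A⟫ +
        ⟪uh, perp v⟫ * ⟪perp v, rPt v A - lPt v A⟫ ≤ 0 := by
      rw [← ULAux.inner_decomp v hv, inner_sub_right]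
      linarith [huhA (rPt v A) hrAm]
    have hd2 : 0 ≤ ⟪uh, v⟫ * ⟪v, rPt v B - lPt v B⟫ +
        ⟪uh, perp v⟫ * ⟪perp v, rPt v B - lPt v B⟫ := by
      rw [← ULAux.inner_decomp v hv, inner_sub_right]
      linarith [huhB (lPt v B) hlBm]
    have hd3 : 0 ≤ ⟪uh', v⟫ * ⟪v, rPt v A - lPt v A⟫ +
        ⟪uh', perp v⟫ * ⟪perp v, rPt v A - lPt v A⟫ := by
      rw [← ULAux.inner_decomp v hv, inner_sub_right]
      linarith [huh'A (lPt v A) hlAm]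
    have hd4 : ⟪uh', v⟫ * ⟪v, rPt v B - lPt v B⟫ +
        ⟪uh', perp v⟫ * ⟪perp v, rPt v B - lPt v B⟫ ≤ 0 := by
      rw [← ULAux.inner_decomp v hv, inner_sub_right]
      linarith [huh'B (rPt v B) hrBm]
    obtain ⟨hpar, hzu, hzu'⟩ := ULAux.ii_arith huhv_lt huh'v_lt hdw hDw hd1 hd2 hd3 hd4
    have huhd0 : ⟪uh, rPt v A - lPt v A⟫ = 0 := by
      rw [ULAux.inner_decomp v hv uh (rPt v A - lPt v A)]; exact hzu
    have hupd0 : ⟪uh', rPt v A - lPt v A⟫ = 0 := by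
      rw [ULAux.inner_decomp v hv uh' (rPt v A - lPt v A)]; exact hzu'
    have hzD : ⟪uh, v⟫ * ⟪v, rPt v B - lPt v B⟫ +
        ⟪uh, perp v⟫ * ⟪perp v, rPt v B - lPt v B⟫ = 0 := by
      have hmul : (⟪uh, v⟫ * ⟪v, rPt v B - lPt v B⟫ +
          ⟪uh, perp v⟫ * ⟪perp v, rPt v B - lPt v B⟫) * ⟪perp v, rPt v A - lPt v A⟫ = 0 := by
        linear_combination ⟪perp v, rPt v B - lPt v B⟫ * hzu + (-⟪uh, v⟫) * hpar
      rcases mul_eq_zero.1 hmul with h | h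
      · exact h
      · exact absurd h (ne_of_gt hdw)
    have huhD0 : ⟪uh, rPt v B - lPt v B⟫ = 0 := by
      rw [ULAux.inner_decomp v hv uh (rPt v B - lPt v B)]; exact hzD
    -- conclusion (ii)
    have hcpar : rPt v B - lPt v B =
        (⟪perp v, rPt v B - lPt v B⟫ / ⟪perp v, rPt v A - lPt v A⟫) • (rPt v A - lPt v A) := by
      apply ULAux.inner_perp_perp v hv
      · rw [real_inner_smul_right, div_mul_cancel₀ _ (ne_of_gt hdw)]
      · rw [real_inner_smul_right]
        rw [div_mul_eq_mul_div, eq_div_iff (ne_of_gt hdw)]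
        linear_combination - hpar
    -- uniqueness of lower unit vectors orthogonal to d
    have huniq : ∀ {u : Pt}, ‖u‖ = 1 → ⟪u, v⟫ < 0 → ⟪u, rPt v A - lPt v A⟫ = 0 → u = uh := by
      intro u hu1 huv hud
      have hud' : ⟪u, v⟫ * ⟪v, rPt v A - lPt v A⟫ +
          ⟪u, perp v⟫ * ⟪perp v, rPt v A - lPt v A⟫ = 0 := by
        rw [← ULAux.inner_decomp v hv]; exact hud
      have hcross : ⟪u, v⟫ * ⟪uh, perp v⟫ = ⟪uh, v⟫ * ⟪u, perp v⟫ := by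
        have hmul : (⟪u, v⟫ * ⟪uh, perp v⟫ - ⟪uh, v⟫ * ⟪u, perp v⟫) *
            ⟪perp v, rPt v A - lPt v A⟫ = 0 := by
          linear_combination ⟪u, v⟫ * hzu - ⟪uh, v⟫ * hud'
        rcases mul_eq_zero.1 hmul with h | h
        · linarith
        · exact absurd h (ne_of_gt hdw)
      have hneg : -u = -uh := by
        apply ULAux.unit_eq_of_cross v hv (by rw [norm_neg]; exact hu1)
          (by rw [norm_neg]; exact huh1)
        · rw [inner_neg_left]; linarith
        · rw [inner_neg_left]; linarith
        · simp only [inner_neg_left]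
          linear_combination hcross
      exact neg_inj.1 hneg
    have hue : uh' = uh := huniq huh'1 huh'v_lt hupd0
    have huhlB : IsExtNormal B uh (lPt v B) := by rw [← hue]; exact huh'B
    have huhlBrB : ⟪uh, lPt v B⟫ = ⟪uh, rPt v B⟫ := by
      have h := huhD0; rw [inner_sub_right] at h; linarith
    refine ⟨?_, Or.inr ⟨⟪perp v, rPt v B - lPt v B⟫ / ⟪perp v, rPt v A - lPt v A⟫, hcpar⟩⟩
    -- conclusion (i)
    intro x hx
    rw [Finset.mem_coe] at hx
    obtain ⟨hxB, ξ, hξ1, hξB, hξv⟩ := ULAux.lower_normal hx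
    have hxall : ∀ u : Pt, ‖u‖ = 1 → IsExtNormal B u x → ⟪u, v⟫ < 0 := by
      have h := hx
      rw [lowerSet, Finset.mem_filter] at h
      exact h.2.2
    have hxlne : x ≠ lPt v B := by intro h; exact ULAux.lPt_not_lower hv hBne (h ▸ hx)
    have hxrne : x ≠ rPt v B := by intro h; exact ULAux.rPt_not_lower hv hBne (h ▸ hx)
    have hgwl : 0 < ⟪perp v, x - lPt v B⟫ := by
      rw [inner_sub_right]
      linarith [ULAux.lPt_lt_w hv hvB hBne hxB hxlne]
    have hgwr : 0 < ⟪perp v, rPt v B - x⟫ := by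
      rw [inner_sub_right]
      linarith [ULAux.w_lt_rPt hv hvB hBne hxB hxrne]
    have hkey : ⟪uh, x⟫ = ⟪uh, lPt v B⟫ := by
      have hle : ⟪uh, x⟫ ≤ ⟪uh, lPt v B⟫ := huhlB x hxB
      rcases eq_or_lt_of_le hle with h | hlt
      · exact h
      exfalso
      by_cases hcom : ∃ u : Pt, ‖u‖ = 1 ∧ IsExtNormal A u (lPt v A) ∧ IsExtNormal B u x
      · obtain ⟨u, hu1, huA, huB⟩ := hcom
        have huv : ⟪u, v⟫ < 0 := hxall u hu1 huB
        have hcontra : ∀ m : Pt, ‖m‖ = 1 → ⟪m, v⟫ < 0 → ⟪m, rPt v A - lPt v A⟫ = 0 →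
            IsExtNormal B m x → False := by
          intro m hm1 hmv hmd hmB
          have hmu := huniq hm1 hmv hmd
          rw [hmu] at hmB
          have h2 := hmB (lPt v B) hlBm
          linarith
        have hnor : ∀ u' : Pt, ‖u'‖ = 1 → IsExtNormal A u' (rPt v A) →
            IsExtNormal B u' x → False := by
          intro u' hu'1 hu'A2 hu'B2
          have hu'v : ⟪u', v⟫ < 0 := hxall u' hu'1 hu'B2
          have hud : ⟪u, rPt v A - lPt v A⟫ ≤ 0 := by
            rw [inner_sub_right]; linarith [huA (rPt v A) hrAm]
          have hu'd : 0 ≤ ⟪u', rPt v A - lPt v A⟫ := by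
            rw [inner_sub_right]; linarith [hu'A2 (lPt v A) hlAm]
          by_cases hzz : ⟪u, rPt v A - lPt v A⟫ = 0
          · exact hcontra u hu1 huv hzz huB
          · have hudlt : ⟪u, rPt v A - lPt v A⟫ < 0 := lt_of_le_of_ne hud hzz
            set n : Pt := ⟪u', rPt v A - lPt v A⟫ • u +
              (-⟪u, rPt v A - lPt v A⟫) • u' with hn
            have hnB : IsExtNormal B n x := ULAux.extNormal_add
              (ULAux.extNormal_smul hu'd huB) (ULAux.extNormal_smul (by linarith) hu'B2)
            have hnd : ⟪n, rPt v A - lPt v A⟫ = 0 := by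
              rw [hn, inner_add_left, real_inner_smul_left, real_inner_smul_left]; ring
            have hnv : ⟪n, v⟫ < 0 := by
              rw [hn, inner_add_left, real_inner_smul_left, real_inner_smul_left]
              have t1 : ⟪u', rPt v A - lPt v A⟫ * ⟪u, v⟫ ≤ 0 :=
                mul_nonpos_iff.2 (Or.inl ⟨hu'd, huv.le⟩)
              have t2 : -⟪u, rPt v A - lPt v A⟫ * ⟪u', v⟫ < 0 :=
                mul_neg_of_pos_of_neg (by linarith) hu'v
              linarith
            have hn0 : n ≠ 0 := by
              intro h0; rw [h0, inner_zero_left] at hnv; linarith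
            have hminv : (0:ℝ) < ‖n‖⁻¹ := inv_pos.2 (norm_pos_iff.2 hn0)
            refine hcontra (‖n‖⁻¹ • n) (norm_smul_inv_norm hn0) ?_ ?_
              (ULAux.extNormal_smul hminv.le hnB)
            · rw [real_inner_smul_left]
              nlinarith [hnv, hminv]
            · rw [real_inner_smul_left, hnd]; ring
        have hyint := ULAux.sum_mem_interior hint hrAm hxB hnor
        rcases hclass (Finset.add_mem_add hrAm hxB) hyint with ⟨b, hbm, he⟩ | ⟨b'', hbm'', he⟩
        · rw [Finset.mem_sdiff] at hbm
          have hxeq : x = b - (rPt v A - lPt v A) := by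
            apply add_left_cancel (a := rPt v A)
            rw [he]; abel
          have hξd : ⟪ξ, rPt v A - lPt v A⟫ ≤ 0 := by
            have hb := hξB b (hUB hbm.1)
            rw [hxeq, inner_sub_right] at hb
            linarith
          have hξd' : ⟪ξ, v⟫ * ⟪v, rPt v A - lPt v A⟫ +
              ⟪ξ, perp v⟫ * ⟪perp v, rPt v A - lPt v A⟫ ≤ 0 := by
            rw [← ULAux.inner_decomp v hv]; exact hξd
          have hξg : 0 ≤ ⟪ξ, v⟫ * ⟪v, x - lPt v B⟫ +
              ⟪ξ, perp v⟫ * ⟪perp v, x - lPt v B⟫ := by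
            rw [← ULAux.inner_decomp v hv, inner_sub_right]
            linarith [hξB (lPt v B) hlBm]
          have hug : ⟪uh, v⟫ * ⟪v, x - lPt v B⟫ +
              ⟪uh, perp v⟫ * ⟪perp v, x - lPt v B⟫ < 0 := by
            rw [← ULAux.inner_decomp v hv, inner_sub_right]
            linarith
          exact ULAux.i_arith_r hξv huhv_lt hdw hgwl hξd' hξg hzu hug
        · have heq2 : x = b'' := add_left_cancel he
          rw [Finset.mem_sdiff] at hbm''
          have hxU : x ∈ U := by rw [heq2]; exact hBadlU hbm''.1
          linarith [hupp hxU hξ1 hξB]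
      · have hyint := ULAux.sum_mem_interior hint hlAm hxB
          (fun u h1 h2 h3 => hcom ⟨u, h1, h2, h3⟩)
        rcases hclass (Finset.add_mem_add hlAm hxB) hyint with ⟨b, hbm, he⟩ | ⟨b'', hbm'', he⟩
        · have heq2 : x = b := add_left_cancel he
          rw [Finset.mem_sdiff] at hbm
          have hxU : x ∈ U := by rw [heq2]; exact hbm.1
          linarith [hupp hxU hξ1 hξB]
        · rw [Finset.mem_sdiff] at hbm''
          have hxeq : x = b'' + (rPt v A - lPt v A) := by
            apply add_left_cancel (a := lPt v A)
            rw [he]; abel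
          have hξd : 0 ≤ ⟪ξ, rPt v A - lPt v A⟫ := by
            have hb := hξB b'' (hUB (hBadlU hbm''.1))
            rw [hxeq, inner_add_right] at hb
            linarith
          have hξd' : 0 ≤ ⟪ξ, v⟫ * ⟪v, rPt v A - lPt v A⟫ +
              ⟪ξ, perp v⟫ * ⟪perp v, rPt v A - lPt v A⟫ := by
            rw [← ULAux.inner_decomp v hv]; exact hξd
          have hξg : ⟪ξ, v⟫ * ⟪v, rPt v B - x⟫ +
              ⟪ξ, perp v⟫ * ⟪perp v, rPt v B - x⟫ ≤ 0 := by
            rw [← ULAux.inner_decomp v hv, inner_sub_right]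
            linarith [hξB (rPt v B) hrBm]
          have hug : 0 < ⟪uh, v⟫ * ⟪v, rPt v B - x⟫ +
              ⟪uh, perp v⟫ * ⟪perp v, rPt v B - x⟫ := by
            rw [← ULAux.inner_decomp v hv, inner_sub_right]
            linarith
          exact ULAux.i_arith_l hξv huhv_lt hdw hgwr hξd' hξg hzu hug
    -- put x on the segment
    have hz0' : ⟪uh, x - lPt v B⟫ = 0 := by rw [inner_sub_right, hkey]; ring
    have e1 : ⟪uh, v⟫ * ⟪v, x - lPt v B⟫ + ⟪uh, perp v⟫ * ⟪perp v, x - lPt v B⟫ = 0 := by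
      rw [← ULAux.inner_decomp v hv]; exact hz0'
    set s : ℝ := ⟪perp v, x - lPt v B⟫ / ⟪perp v, rPt v B - lPt v B⟫ with hsdef
    have hs_eq : x - lPt v B = s • (rPt v B - lPt v B) := by
      apply ULAux.inner_perp_perp v hv
      · rw [real_inner_smul_right, hsdef, div_mul_cancel₀ _ (ne_of_gt hDw)]
      · rw [real_inner_smul_right, hsdef, div_mul_eq_mul_div, eq_div_iff (ne_of_gt hDw)]
        have hmm : ⟪uh, v⟫ * (⟪v, x - lPt v B⟫ * ⟪perp v, rPt v B - lPt v B⟫ -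
            ⟪perp v, x - lPt v B⟫ * ⟪v, rPt v B - lPt v B⟫) = 0 := by
          linear_combination ⟪perp v, rPt v B - lPt v B⟫ * e1 - ⟪perp v, x - lPt v B⟫ * hzD
        rcases mul_eq_zero.1 hmm with h | h
        · exact absurd h (ne_of_lt huhv_lt)
        · linarith
    have hs0 : 0 ≤ s := by
      rw [hsdef]
      exact div_nonneg hgwl.le hDw.le
    have hs1 : s ≤ 1 := by
      rw [hsdef, div_le_one hDw, inner_sub_right, inner_sub_right]
      linarith [(ULAux.rPt_spec v B hBne).2 x hxB]
    refine ⟨1 - s, s, by linarith, hs0, by ring, ?_⟩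
    have hxval : x = lPt v B + s • (rPt v B - lPt v B) := by
      rw [← hs_eq]; abel
    rw [hxval, smul_sub, sub_smul, one_smul]
    abel
end
end

section
/- Let A ⊂ ℝ² be a set of three non-collinear points and let B = A + A. Then b_A = 3, i_A = 0, b_B = 6, i_B = 0, i_{A+B} = 1 and b_{A+B} = 9; in particular 2 i_{A+B} < b_A + b_B − 6, while √(2 i_{A+B} + b_{A+B} − 2) = √(2 i_A + b_A − 2) + √(2 i_B + b_B − 2). -/
open scoped Pointwise Classical RealInnerProductSpace

noncomputable section

/-- The combination `a • p + b • q + c • r`. -/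
def cmb (p q r : Pt) (a b c : ℝ) : Pt := a • p + b • q + c • r

theorem triangle_double_example
    (A : Finset Pt) (hcard : A.card = 3) (hA : ¬ Collinear ℝ (A : Set Pt))
    (B : Finset Pt) (hB : B = A + A) :
    bdryCard A = 3 ∧ intCard A = 0 ∧
      bdryCard B = 6 ∧ intCard B = 0 ∧
      intCard (A + B) = 1 ∧ bdryCard (A + B) = 9 ∧
      2 * (intCard (A + B) : ℤ) < (bdryCard A : ℤ) + (bdryCard B : ℤ) - 6 ∧
      Real.sqrt (2 * (intCard (A + B) : ℝ) + (bdryCard (A + B) : ℝ) - 2) =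
        Real.sqrt (2 * (intCard A : ℝ) + (bdryCard A : ℝ) - 2) +
          Real.sqrt (2 * (intCard B : ℝ) + (bdryCard B : ℝ) - 2) := by
  obtain ⟨p, q, r, hpq, hpr, hqr, hA3⟩ := Finset.card_eq_three.mp hcard
  have hcoll : ¬ Collinear ℝ ({p, q, r} : Set Pt) := by
    rw [hA3] at hA; simpa using hA
  have hAI : AffineIndependent ℝ ![p, q, r] := affineIndependent_iff_not_collinear_set.mpr hcoll
  have hspan : affineSpan ℝ (Set.range ![p, q, r]) = ⊤ := by
    rw [hAI.affineSpan_eq_top_iff_card_eq_finrank_add_one]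
    simp [finrank_euclideanSpace]
  let bb : AffineBasis (Fin 3) ℝ Pt := ⟨![p, q, r], hAI, hspan⟩
  have hbb : ⇑bb = ![p, q, r] := rfl
  set T := convexHull ℝ (A : Set Pt) with hTdef
  have hrange : Set.range ![p, q, r] = ((A : Finset Pt) : Set Pt) := by
    rw [hA3]
    ext x
    simp only [Set.mem_range, Finset.coe_insert, Set.mem_insert_iff, Finset.coe_singleton,
      Set.mem_singleton_iff]
    constructor
    · rintro ⟨i, rfl⟩; fin_cases i <;> simp
    · rintro (rfl | rfl | rfl)
      exacts [⟨0, rfl⟩, ⟨1, rfl⟩, ⟨2, rfl⟩]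
  have hInt : interior T = {x | ∀ i, 0 < bb.coord i x} := by
    rw [hTdef, ← hrange, ← hbb]
    exact bb.interior_convexHull
  have hcoord : ∀ a b c : ℝ, a + b + c = 1 →
      bb.coord 0 (cmb p q r a b c) = a ∧ bb.coord 1 (cmb p q r a b c) = b ∧
        bb.coord 2 (cmb p q r a b c) = c := by
    intro a b c h
    have hw : (Finset.univ.sum ![a, b, c]) = 1 := by
      simp [Fin.sum_univ_three]; linarith
    have hco : Finset.univ.affineCombination ℝ (⇑bb) ![a, b, c] = cmb p q r a b c := by
      rw [Finset.univ.affineCombination_eq_linear_combination _ _ hw, hbb]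
      simp [Fin.sum_univ_three, cmb]
    refine ⟨?_, ?_, ?_⟩ <;>
      · rw [← hco, bb.coord_apply_combination_of_mem (Finset.mem_univ _) hw]; simp
  have hmemInt : ∀ s a b c : ℝ, 0 < s → a + b + c = s →
      (cmb p q r a b c ∈ interior (s • T) ↔ 0 < a ∧ 0 < b ∧ 0 < c) := by
    intro s a b c hs hsum
    rw [interior_smul₀ hs.ne' , Set.mem_smul_set_iff_inv_smul_mem₀ hs.ne']
    have hsc : s⁻¹ • cmb p q r a b c = cmb p q r (a / s) (b / s) (c / s) := by
      simp [cmb, smul_add, smul_smul, div_eq_inv_mul]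
    have hsum' : a / s + b / s + c / s = 1 := by field_simp; linarith
    obtain ⟨h0, h1, h2⟩ := hcoord (a / s) (b / s) (c / s) hsum'
    rw [hsc, hInt, Set.mem_setOf_eq]
    constructor
    · intro h
      have ha := h 0; have hb := h 1; have hc := h 2
      rw [h0] at ha; rw [h1] at hb; rw [h2] at hc
      refine ⟨?_, ?_, ?_⟩ <;> [skip; skip; skip] <;>
        [exact (div_pos_iff_of_pos_right hs).mp ha;
         exact (div_pos_iff_of_pos_right hs).mp hb;
         exact (div_pos_iff_of_pos_right hs).mp hc]
    · rintro ⟨ha, hb, hc⟩ i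
      fin_cases i
      · exact lt_of_lt_of_eq (div_pos ha hs) h0.symm
      · exact lt_of_lt_of_eq (div_pos hb hs) h1.symm
      · exact lt_of_lt_of_eq (div_pos hc hs) h2.symm
  have hne : ∀ s a b c a' b' c' : ℝ, 0 < s → a + b + c = s → a' + b' + c' = s →
      ¬(a = a' ∧ b = b' ∧ c = c') → cmb p q r a b c ≠ cmb p q r a' b' c' := by
    intro s a b c a' b' c' hs h h' hne heq
    apply hne
    have hdiv : cmb p q r (a / s) (b / s) (c / s) = cmb p q r (a' / s) (b' / s) (c' / s) := by
      have := congrArg (fun x : Pt => s⁻¹ • x) heq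
      simpa [cmb, smul_add, smul_smul, div_eq_inv_mul] using this
    have hsum1 : a / s + b / s + c / s = 1 := by field_simp; linarith
    have hsum2 : a' / s + b' / s + c' / s = 1 := by field_simp; linarith
    obtain ⟨h0, h1, h2⟩ := hcoord (a / s) (b / s) (c / s) hsum1
    obtain ⟨h0', h1', h2'⟩ := hcoord (a' / s) (b' / s) (c' / s) hsum2
    rw [hdiv] at h0 h1 h2
    rw [h0'] at h0; rw [h1'] at h1; rw [h2'] at h2
    have hs0 := hs.ne'
    refine ⟨?_, ?_, ?_⟩ <;>
      [field_simp at h0; field_simp at h1; field_simp at h2] <;>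
      [exact h0.symm; exact h1.symm; exact h2.symm]
  have hadd : ∀ a b c a' b' c' : ℝ, cmb p q r a b c + cmb p q r a' b' c' =
      cmb p q r (a + a') (b + b') (c + c') := by
    intro a b c a' b' c'
    simp only [cmb, add_smul]
    abel
  have hA3' : A = ({cmb p q r 1 0 0, cmb p q r 0 1 0, cmb p q r 0 0 1} : Finset Pt) := by
    rw [hA3]; simp [cmb]
  have hBe : B = ({cmb p q r 2 0 0, cmb p q r 0 2 0, cmb p q r 0 0 2, cmb p q r 1 1 0, cmb p q r 1 0 1, cmb p q r 0 1 1} : Finset Pt) := by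
    rw [hB, hA3']
    ext x
    simp only [Finset.mem_add, Finset.mem_insert, Finset.mem_singleton]
    constructor
    · rintro ⟨a, (rfl | rfl | rfl), b, (rfl | rfl | rfl), rfl⟩ <;> rw [hadd] <;> norm_num
    · rintro (rfl | rfl | rfl | rfl | rfl | rfl)
      · exact ⟨_, Or.inl rfl, _, Or.inl rfl, by rw [hadd]; norm_num⟩
      · exact ⟨_, Or.inr (Or.inl rfl), _, Or.inr (Or.inl rfl), by rw [hadd]; norm_num⟩
      · exact ⟨_, Or.inr (Or.inr (rfl)), _, Or.inr (Or.inr (rfl)), by rw [hadd]; norm_num⟩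
      · exact ⟨_, Or.inl rfl, _, Or.inr (Or.inl rfl), by rw [hadd]; norm_num⟩
      · exact ⟨_, Or.inl rfl, _, Or.inr (Or.inr (rfl)), by rw [hadd]; norm_num⟩
      · exact ⟨_, Or.inr (Or.inl rfl), _, Or.inr (Or.inr (rfl)), by rw [hadd]; norm_num⟩
  have hABe : A + B = ({cmb p q r 3 0 0, cmb p q r 0 3 0, cmb p q r 0 0 3, cmb p q r 2 1 0, cmb p q r 2 0 1, cmb p q r 1 2 0, cmb p q r 0 2 1, cmb p q r 1 0 2, cmb p q r 0 1 2, cmb p q r 1 1 1} : Finset Pt) := by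
    rw [hBe, hA3']
    ext x
    simp only [Finset.mem_add, Finset.mem_insert, Finset.mem_singleton]
    constructor
    · rintro ⟨a, (rfl | rfl | rfl), b, (rfl | rfl | rfl | rfl | rfl | rfl), rfl⟩ <;> rw [hadd] <;> norm_num
    · rintro (rfl | rfl | rfl | rfl | rfl | rfl | rfl | rfl | rfl | rfl)
      · exact ⟨_, Or.inl rfl, _, Or.inl rfl, by rw [hadd]; norm_num⟩
      · exact ⟨_, Or.inr (Or.inl rfl), _, Or.inr (Or.inl rfl), by rw [hadd]; norm_num⟩
      · exact ⟨_, Or.inr (Or.inr (rfl)), _, Or.inr (Or.inr (Or.inl rfl)), by rw [hadd]; norm_num⟩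
      · exact ⟨_, Or.inl rfl, _, Or.inr (Or.inr (Or.inr (Or.inl rfl))), by rw [hadd]; norm_num⟩
      · exact ⟨_, Or.inl rfl, _, Or.inr (Or.inr (Or.inr (Or.inr (Or.inl rfl)))), by rw [hadd]; norm_num⟩
      · exact ⟨_, Or.inl rfl, _, Or.inr (Or.inl rfl), by rw [hadd]; norm_num⟩
      · exact ⟨_, Or.inr (Or.inl rfl), _, Or.inr (Or.inr (Or.inr (Or.inr (Or.inr (rfl))))), by rw [hadd]; norm_num⟩
      · exact ⟨_, Or.inl rfl, _, Or.inr (Or.inr (Or.inl rfl)), by rw [hadd]; norm_num⟩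
      · exact ⟨_, Or.inr (Or.inl rfl), _, Or.inr (Or.inr (Or.inl rfl)), by rw [hadd]; norm_num⟩
      · exact ⟨_, Or.inl rfl, _, Or.inr (Or.inr (Or.inr (Or.inr (Or.inr (rfl))))), by rw [hadd]; norm_num⟩
  have hcB : B.card = 6 := by
    rw [hBe]
    rw [Finset.card_insert_of_notMem (by simp only [Finset.mem_insert, Finset.mem_singleton]; push_neg; (repeat' apply And.intro) <;> (apply hne 2 <;> norm_num)), Finset.card_insert_of_notMem (by simp only [Finset.mem_insert, Finset.mem_singleton]; push_neg; (repeat' apply And.intro) <;> (apply hne 2 <;> norm_num)), Finset.card_insert_of_notMem (by simp only [Finset.mem_insert, Finset.mem_singleton]; push_neg; (repeat' apply And.intro) <;> (apply hne 2 <;> norm_num)), Finset.card_insert_of_notMem (by simp only [Finset.mem_insert, Finset.mem_singleton]; push_neg; (repeat' apply And.intro) <;> (apply hne 2 <;> norm_num)), Finset.card_insert_of_notMem (by simp only [Finset.mem_insert, Finset.mem_singleton]; push_neg; (repeat' apply And.intro) <;> (apply hne 2 <;> norm_num)), Finset.card_singleton]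
  have hcAB : (A + B).card = 10 := by
    rw [hABe]
    rw [Finset.card_insert_of_notMem (by simp only [Finset.mem_insert, Finset.mem_singleton]; push_neg; (repeat' apply And.intro) <;> (apply hne 3 <;> norm_num)), Finset.card_insert_of_notMem (by simp only [Finset.mem_insert, Finset.mem_singleton]; push_neg; (repeat' apply And.intro) <;> (apply hne 3 <;> norm_num)), Finset.card_insert_of_notMem (by simp only [Finset.mem_insert, Finset.mem_singleton]; push_neg; (repeat' apply And.intro) <;> (apply hne 3 <;> norm_num)), Finset.card_insert_of_notMem (by simp only [Finset.mem_insert, Finset.mem_singleton]; push_neg; (repeat' apply And.intro) <;> (apply hne 3 <;> norm_num)), Finset.card_insert_of_notMem (by simp only [Finset.mem_insert, Finset.mem_singleton]; push_neg; (repeat' apply And.intro) <;> (apply hne 3 <;> norm_num)), Finset.card_insert_of_notMem (by simp only [Finset.mem_insert, Finset.mem_singleton]; push_neg; (repeat' apply And.intro) <;> (apply hne 3 <;> norm_num)), Finset.card_insert_of_notMem (by simp only [Finset.mem_insert, Finset.mem_singleton]; push_neg; (repeat' apply And.intro) <;> (apply hne 3 <;> norm_num)), Finset.card_insert_of_notMem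 (by simp only [Finset.mem_insert, Finset.mem_singleton]; push_neg; (repeat' apply And.intro) <;> (apply hne 3 <;> norm_num)), Finset.card_insert_of_notMem (by simp only [Finset.mem_insert, Finset.mem_singleton]; push_neg; (repeat' apply And.intro) <;> (apply hne 3 <;> norm_num)), Finset.card_singleton]
  have hconv : Convex ℝ T := convex_convexHull ℝ _
  have hHB : convexHull ℝ (B : Set Pt) = (2 : ℝ) • T := by
    rw [hB, Finset.coe_add, convexHull_add, ← hTdef]
    have h2 := hconv.add_smul (zero_le_one) (zero_le_one)
    norm_num at h2
    exact h2.symm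
  have hHAB : convexHull ℝ ((A + B : Finset Pt) : Set Pt) = (3 : ℝ) • T := by
    rw [Finset.coe_add, convexHull_add, ← hTdef, hHB]
    have h3 := hconv.add_smul (zero_le_one) (by norm_num : (0:ℝ) ≤ 2)
    norm_num at h3
    exact h3.symm
  have hT1 : T = (1 : ℝ) • T := (one_smul ℝ T).symm
  have hiA : intCard A = 0 := by
    rw [intCard, Finset.card_eq_zero, Finset.filter_eq_empty_iff]
    intro x hx
    rw [← hTdef, hT1]
    rw [hA3'] at hx
    simp only [Finset.mem_insert, Finset.mem_singleton] at hx
    rcases hx with rfl | rfl | rfl <;>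
      · intro hc
        have := (hmemInt 1 _ _ _ (by norm_num) (by norm_num)).mp hc
        norm_num at this
  have hiB : intCard B = 0 := by
    rw [intCard, Finset.card_eq_zero, Finset.filter_eq_empty_iff]
    intro x hx
    rw [hHB]
    rw [hBe] at hx
    simp only [Finset.mem_insert, Finset.mem_singleton] at hx
    rcases hx with rfl | rfl | rfl | rfl | rfl | rfl <;>
      · intro hc
        have := (hmemInt 2 _ _ _ (by norm_num) (by norm_num)).mp hc
        norm_num at this
  have hiAB : intCard (A + B) = 1 := by
    rw [intCard]
    have hfeq : ((A + B).filter fun x =>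
        x ∈ interior (convexHull ℝ ((A + B : Finset Pt) : Set Pt))) = {cmb p q r 1 1 1} := by
      ext x
      simp only [Finset.mem_filter, Finset.mem_singleton, hHAB]
      constructor
      · rintro ⟨hx, hint⟩
        rw [hABe] at hx
        simp only [Finset.mem_insert, Finset.mem_singleton] at hx
        rcases hx with rfl | rfl | rfl | rfl | rfl | rfl | rfl | rfl | rfl | rfl <;>
          first
            | rfl
            | (exfalso
               have := (hmemInt 3 _ _ _ (by norm_num) (by norm_num)).mp hint
               norm_num at this)
      · rintro rfl
        refine ⟨by rw [hABe]; simp, ?_⟩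
        exact (hmemInt 3 1 1 1 (by norm_num) (by norm_num)).mpr (by norm_num)
    rw [hfeq, Finset.card_singleton]
  have hkey : ∀ X : Finset Pt, bdryCard X + intCard X = X.card := by
    intro X
    have hcl : IsClosed (convexHull ℝ (X : Set Pt)) :=
      (X.finite_toSet.isCompact_convexHull (𝕜 := ℝ)).isClosed
    have h1 : ∀ x ∈ X, ((x ∈ frontier (convexHull ℝ (X : Set Pt))) =
        (x ∉ interior (convexHull ℝ (X : Set Pt)))) := by
      intro x hx
      rw [frontier, hcl.closure_eq]
      simp [Set.mem_diff, subset_convexHull ℝ (X : Set Pt) hx]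
    rw [bdryCard, intCard, Finset.filter_congr (fun x hx => by rw [h1 x hx]),
      Finset.filter_not, Finset.card_sdiff_add_card_eq_card (Finset.filter_subset _ _)]
  have hbA : bdryCard A = 3 := by have := hkey A; omega
  have hbB : bdryCard B = 6 := by have := hkey B; omega
  have hbAB : bdryCard (A + B) = 9 := by have := hkey (A + B); omega
  refine ⟨hbA, hiA, hbB, hiB, hiAB, hbAB, ?_, ?_⟩
  · rw [hbA, hbB, hiAB]; norm_num
  · rw [hbA, hbB, hbAB, hiA, hiB, hiAB]
    have h9 : Real.sqrt (2 * (1:ℝ) + 9 - 2) = 3 := by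
      rw [show 2 * (1:ℝ) + 9 - 2 = 3 ^ 2 by norm_num, Real.sqrt_sq (by norm_num)]
    have h1 : Real.sqrt (2 * (0:ℝ) + 3 - 2) = 1 := by
      rw [show 2 * (0:ℝ) + 3 - 2 = 1 ^ 2 by norm_num, Real.sqrt_sq (by norm_num)]
    have h4 : Real.sqrt (2 * (0:ℝ) + 6 - 2) = 2 := by
      rw [show 2 * (0:ℝ) + 6 - 2 = 2 ^ 2 by norm_num, Real.sqrt_sq (by norm_num)]
    push_cast
    rw [h9, h1, h4]
    norm_num
end
end
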